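/- For every τ ∈ [0, 1/2] the d'Alembert operators satisfy the identity C(2τ) + I = 2·C(τ)² as bounded operators on L²(X¹,m¹), where I is the identity operator. -/

import Mathlib

open MeasureTheory Set ENNReal

set_option linter.unusedSectionVars false

noncomputable section

/-- A weighted network: countable connected graph without loops or multiple edges,
equipped with positive conductances `c` satisfying `m⁰(x) = ∑_{y∼x} c(xy) < ∞`. -/
structure Network (V : Type) : Type where
  adj : V → V → Prop
  adj_symm : ∀ x y, adj x y → adj y x
  adj_irrefl : ∀ x, ¬ adj x x
  adj_connected : ∀ x y, Relation.ReflTransGen adj x y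
  c : V → V → ℝ
  c_symm : ∀ x y, c x y = c y x
  c_pos : ∀ x y, adj x y → 0 < c x y
  c_eq_zero : ∀ x y, ¬ adj x y → c x y = 0
  c_summable : ∀ x, Summable fun y => c x y

namespace Network

variable {V : Type} [Countable V] [MeasurableSpace V] [DiscreteMeasurableSpace V]

/-- The vertex weight `m⁰(x) = ∑_{y : y ∼ x} c(xy)`. -/
def m0 (N : Network V) (x : V) : ℝ := ∑' y, N.c x y

/-- The measure `m¹` on the metric graph `X¹`.  A point `((x,y),t)` represents the point
at distance `t ∈ (0,1)` from `x` on the edge `[x,y]`; each edge appears with both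
orientations, whence the factor `1/2`. -/
def edgeMeasure (N : Network V) : Measure ((V × V) × ℝ) :=
  Measure.sum fun e : V × V =>
    Measure.map (fun t => (e, t))
      ((ENNReal.ofReal (N.c e.1 e.2 / 2)) • (volume.restrict (Set.Ioo (0:ℝ) 1)))

/-- The identification `(xy,t) ≡ (yx,1-t)` of the two orientations of an edge. -/
def eFlip : (V × V) × ℝ → (V × V) × ℝ := fun p => ((p.1.2, p.1.1), 1 - p.2)

theorem measurable_eFlip : Measurable (eFlip (V := V)) := by
  apply Measurable.prod
  · exact ((measurable_snd.comp measurable_fst).prodMk (measurable_fst.comp measurable_fst))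
  · exact measurable_const.sub measurable_snd

theorem measurePreserving_eFlip (N : Network V) :
    MeasurePreserving (eFlip (V := V)) N.edgeMeasure N.edgeMeasure := by
  refine ⟨measurable_eFlip, ?_⟩
  ext s hs
  rw [Measure.map_apply measurable_eFlip hs, edgeMeasure,
    Measure.sum_apply _ (measurable_eFlip hs), Measure.sum_apply _ hs]
  have key : ∀ e : V × V,
      (Measure.map (fun t => (e, t))
        ((ENNReal.ofReal (N.c e.1 e.2 / 2)) • (volume.restrict (Set.Ioo (0:ℝ) 1))))
          (eFlip ⁻¹' s)
      = (Measure.map (fun t => ((e.2, e.1), t))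
        ((ENNReal.ofReal (N.c e.2 e.1 / 2)) • (volume.restrict (Set.Ioo (0:ℝ) 1)))) s := by
    intro e
    have hme : Measurable fun t : ℝ => (e, t) := measurable_prodMk_left
    have hme' : Measurable fun t : ℝ => ((e.2, e.1), t) := measurable_prodMk_left
    rw [Measure.map_apply hme (measurable_eFlip hs), Measure.map_apply hme' hs,
      Measure.smul_apply, Measure.smul_apply, N.c_symm e.1 e.2]
    congr 1
    have hpre : ((fun t : ℝ => (e, t)) ⁻¹' (eFlip ⁻¹' s))
        = (fun t : ℝ => 1 - t) ⁻¹' ((fun t : ℝ => ((e.2, e.1), t)) ⁻¹' s) := by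
      ext t; simp [eFlip]
    rw [hpre]
    have hmp : MeasurePreserving (fun t : ℝ => 1 - t)
        (volume.restrict (Set.Ioo (0:ℝ) 1)) (volume.restrict (Set.Ioo (0:ℝ) 1)) := by
      have h0 : MeasurePreserving (fun t : ℝ => 1 - t) volume volume :=
        Measure.measurePreserving_sub_left volume 1
      have h1 := h0.restrict_preimage (s := Set.Ioo (0:ℝ) 1) measurableSet_Ioo
      have h2 : (fun t : ℝ => 1 - t) ⁻¹' (Set.Ioo (0:ℝ) 1) = Set.Ioo (0:ℝ) 1 := by
        ext t; constructor <;> (intro ht; simp only [Set.mem_preimage, Set.mem_Ioo] at *; constructor <;> linarith [ht.1, ht.2])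
      rwa [h2] at h1
    exact (hmp.measure_preimage ((hme' hs).nullMeasurableSet)).symm ▸ rfl
  calc
    (∑' e : V × V,
        (Measure.map (fun t => (e, t))
          ((ENNReal.ofReal (N.c e.1 e.2 / 2)) • (volume.restrict (Set.Ioo (0:ℝ) 1))))
            (eFlip ⁻¹' s))
        = ∑' e : V × V,
          (Measure.map (fun t => ((e.2, e.1), t))
            ((ENNReal.ofReal (N.c e.2 e.1 / 2)) • (volume.restrict (Set.Ioo (0:ℝ) 1)))) s :=
      tsum_congr key
    _ = ∑' e : V × V,
          (Measure.map (fun t => (e, t))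
            ((ENNReal.ofReal (N.c e.1 e.2 / 2)) • (volume.restrict (Set.Ioo (0:ℝ) 1)))) s :=
      (Equiv.prodComm V V).tsum_eq fun e =>
        (Measure.map (fun t => (e, t))
          ((ENNReal.ofReal (N.c e.1 e.2 / 2)) • (volume.restrict (Set.Ioo (0:ℝ) 1)))) s

/-- The continuous linear map `F ↦ F ∘ σ` induced by the edge-orientation flip. -/
def flipOp (N : Network V) : Lp ℂ 2 N.edgeMeasure →L[ℂ] Lp ℂ 2 N.edgeMeasure :=
  (Lp.compMeasurePreservingₗᵢ (E := ℂ) (p := 2) ℂ (eFlip (V := V))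
    N.measurePreserving_eFlip).toContinuousLinearMap

/-- The Hilbert space `L²(X¹, m¹)` of square-integrable functions on the metric graph,
realized as the subspace of `L²` functions on oriented edges which are compatible with
the identification `(xy,t) ≡ (yx, 1-t)`. -/
def L2X (N : Network V) : Submodule ℂ (Lp ℂ 2 N.edgeMeasure) :=
  LinearMap.ker (N.flipOp - ContinuousLinearMap.id ℂ (Lp ℂ 2 N.edgeMeasure)).toLinearMap

theorem isClosed_L2X (N : Network V) : IsClosed (N.L2X : Set (Lp ℂ 2 N.edgeMeasure)) :=
  ContinuousLinearMap.isClosed_ker (N.flipOp - ContinuousLinearMap.id ℂ (Lp ℂ 2 N.edgeMeasure))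

instance (N : Network V) : CompleteSpace N.L2X :=
  (isClosed_L2X N).completeSpace_coe

end Network

namespace Network

variable {V : Type} [Countable V] [MeasurableSpace V] [DiscreteMeasurableSpace V]

/-- The value of (a representative of) `F ∈ L²(X¹,m¹)` at the point of the edge `[x,y]`
at distance `t` from `x`. -/
def edgeFun (N : Network V) (F : Lp ℂ 2 N.edgeMeasure) (x y : V) (t : ℝ) : ℂ :=
  F ((x, y), t)

/-- The counting measure on vertices weighted by `m⁰`; `ℓ²(X⁰,m⁰) = Lp ℂ 2 N.vertexMeasure`. -/
def vertexMeasure (N : Network V) : Measure V :=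
  Measure.sum fun x => (ENNReal.ofReal (N.m0 x)) • Measure.dirac x

/-- The averaging operator, at the level of functions. -/
def avgFun (N : Network V) (f : V → V → ℝ → ℂ) (x y : V) (t : ℝ) : ℂ :=
  (N.m0 x : ℂ)⁻¹ * (∑' u, (N.c x u : ℂ) * (∫ s in (0:ℝ)..(1 - t), f x u s))
    + (N.m0 y : ℂ)⁻¹ * (∑' v, (N.c y v : ℂ) * (∫ s in (0:ℝ)..t, f y v s))

/-- `f, g, h` are (continuous versions of) an element of `Ĥ²(X¹,m¹)` together with its first
and second edgewise derivatives: on each edge, `g` is the derivative of `f` and `h` the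
derivative of `g` (in the sense of absolutely continuous functions, via the fundamental
theorem of calculus), and `f`, `g`, `h` are square-integrable on the metric graph. -/
structure IsH2Rep (N : Network V) (f g h : V → V → ℝ → ℂ) : Prop where
  ftc₁ : ∀ x y, N.adj x y → ∀ t ∈ Set.Icc (0:ℝ) 1,
    f x y t = f x y 0 + ∫ s in (0:ℝ)..t, g x y s
  ftc₂ : ∀ x y, N.adj x y → ∀ t ∈ Set.Icc (0:ℝ) 1,
    g x y t = g x y 0 + ∫ s in (0:ℝ)..t, h x y s
  intervalIntegrable_g : ∀ x y, N.adj x y → IntervalIntegrable (g x y) volume 0 1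
  intervalIntegrable_h : ∀ x y, N.adj x y → IntervalIntegrable (h x y) volume 0 1
  memL2_f : MemLp (fun p : (V × V) × ℝ => f p.1.1 p.1.2 p.2) 2 N.edgeMeasure
  memL2_g : MemLp (fun p : (V × V) × ℝ => g p.1.1 p.1.2 p.2) 2 N.edgeMeasure
  memL2_h : MemLp (fun p : (V × V) × ℝ => h p.1.1 p.1.2 p.2) 2 N.edgeMeasure

/-- The graph of the operator `S = -d²/dt²` with domain the functions in `Ĥ²(X¹,m¹)` which are
continuous at the vertices: `(F, G) ∈ graph S` iff `F` has an edgewise `H²` representative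
`f` (with derivatives `g`, `h`), `f` is continuous at each vertex, and `G = -f''`. -/
def SGraph (N : Network V) (F G : N.L2X) : Prop :=
  ∃ f g h : V → V → ℝ → ℂ, N.IsH2Rep f g h ∧
    (⇑(F : Lp ℂ 2 N.edgeMeasure) =ᵐ[N.edgeMeasure] fun p => f p.1.1 p.1.2 p.2) ∧
    (∀ x u v, N.adj x u → N.adj x v → f x u 0 = f x v 0) ∧
    (⇑(G : Lp ℂ 2 N.edgeMeasure) =ᵐ[N.edgeMeasure] fun p => -(h p.1.1 p.1.2 p.2))

/-- The graph of the (Kirchhoff) Laplacian `L`: the restriction of `S` to the functions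
satisfying moreover `F'(x) = ∑_{y∼x} c(xy) F'(xy,0+) = 0` at every vertex `x`. -/
def LGraph (N : Network V) (F G : N.L2X) : Prop :=
  ∃ f g h : V → V → ℝ → ℂ, N.IsH2Rep f g h ∧
    (⇑(F : Lp ℂ 2 N.edgeMeasure) =ᵐ[N.edgeMeasure] fun p => f p.1.1 p.1.2 p.2) ∧
    (∀ x u v, N.adj x u → N.adj x v → f x u 0 = f x v 0) ∧
    (∀ x, Summable fun y => (N.c x y : ℂ) * g x y 0) ∧
    (∀ x, ∑' y, (N.c x y : ℂ) * g x y 0 = 0) ∧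
    (⇑(G : Lp ℂ 2 N.edgeMeasure) =ᵐ[N.edgeMeasure] fun p => -(h p.1.1 p.1.2 p.2))

end Network

/-- The graph of the adjoint of a densely defined operator, described by its graph `T`:
`(G,K) ∈ graph T*` iff `⟪G, SF⟫ = ⟪K, F⟫` for all `(F, SF) ∈ T`. -/
def adjointGraph {H : Type*} [NormedAddCommGroup H] [InnerProductSpace ℂ H]
    (T : Set (H × H)) : Set (H × H) :=
  {q | ∀ p ∈ T, (inner ℂ q.1 p.2 : ℂ) = inner ℂ q.2 p.1}

/-- A densely defined operator given by its graph `T` is self-adjoint if `T* = T`. -/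
def IsSelfAdjointGraph {H : Type*} [NormedAddCommGroup H] [InnerProductSpace ℂ H]
    (T : Set (H × H)) : Prop :=
  Dense (Prod.fst '' T) ∧ adjointGraph T = T

/-- The entire function `Φ(z,t) = t` for `z = 0` and `sin(zt)/z` otherwise. -/
def Phi (z : ℂ) (t : ℝ) : ℂ := if z = 0 then (t : ℂ) else Complex.sin (z * t) / z

namespace Network

variable {V : Type} [Countable V] [MeasurableSpace V] [DiscreteMeasurableSpace V]

/-- Iterated forward extension step for the d'Alembert extension: `fwdExt f n x y s`
represents `F̃(xy, s + n)` for `s ∈ (0,1]`. -/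
def fwdExt (N : Network V) (f : V → V → ℝ → ℂ) : ℕ → V → V → ℝ → ℂ
  | 0 => f
  | (n+1) => fun x y s =>
      (2 / (N.m0 y) : ℂ) * ∑' v, (N.c y v : ℂ) * N.fwdExt f n y v s - N.fwdExt f n y x s

/-- Iterated backward extension step for the d'Alembert extension: `bwdExt f n x y s`
represents `F̃(xy, s - n)` for `s ∈ [0,1)`. -/
def bwdExt (N : Network V) (f : V → V → ℝ → ℂ) : ℕ → V → V → ℝ → ℂ
  | 0 => f
  | (n+1) => fun x y s =>
      (2 / (N.m0 x) : ℂ) * ∑' u, (N.c x u : ℂ) * N.bwdExt f n u x s - N.bwdExt f n y x s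

/-- The d'Alembert extension `F̃` of a function `F` on the metric graph: each edge component
`t ↦ F(xy,t)`, `t ∈ [0,1]`, is extended to the whole real line by the recursion
`F̃(xy,t) = (2/m⁰(y)) ∑_{v∼y} c(yv) F̃(yv,t-1) - F̃(yx,t-1)` for `t > 1` and
`F̃(xy,t) = (2/m⁰(x)) ∑_{u∼x} c(ux) F̃(ux,t+1) - F̃(yx,t+1)` for `t < 0`. -/
def tilde (N : Network V) (f : V → V → ℝ → ℂ) (x y : V) (t : ℝ) : ℂ :=
  if 0 ≤ t ∧ t ≤ 1 then f x y t
  else if 1 < t then N.fwdExt f (⌈t⌉ - 1).toNat x y (t - ((⌈t⌉ - 1 : ℤ) : ℝ))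
  else N.bwdExt f (-⌊t⌋).toNat x y (t + ((-⌊t⌋ : ℤ) : ℝ))

/-- The d'Alembert operator `C(τ)` at the level of functions. -/
def dAlembertFun (N : Network V) (f : V → V → ℝ → ℂ) (τ : ℝ) (x y : V) (t : ℝ) : ℂ :=
  (N.tilde f x y (t + τ) + N.tilde f x y (t - τ)) / 2

/-- The squared norm `‖g‖²_{L²(X¹,m¹)} = (1/2) ∑_x ∑_{y} c(xy) ∫₀¹ |g(xy,t)|² dt`
(with values in `ℝ≥0∞`). -/
def normSq (N : Network V) (g : V → V → ℝ → ℂ) : ℝ≥0∞ :=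
  (1/2 : ℝ≥0∞) * ∑' x, ∑' y, ENNReal.ofReal (N.c x y) *
    ∫⁻ t in Set.Ioo (0:ℝ) 1, ((‖g x y t‖₊ : ℝ≥0∞) ^ 2)

end Network



/-! ### Auxiliary development for the proof -/

namespace Network

variable {V : Type} [Countable V] [MeasurableSpace V] [DiscreteMeasurableSpace V]

lemma c_nonneg (N : Network V) (x y : V) : 0 ≤ N.c x y := by
  by_cases h : N.adj x y
  · exact (N.c_pos x y h).le
  · exact le_of_eq (N.c_eq_zero x y h).symm

lemma adj_of_c_ne (N : Network V) {x y : V} (h : N.c x y ≠ 0) : N.adj x y := by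
  by_contra h'; exact h (N.c_eq_zero x y h')

lemma m0_nonneg (N : Network V) (x : V) : 0 ≤ N.m0 x :=
  tsum_nonneg fun y => N.c_nonneg x y

lemma m0_pos (N : Network V) {x y : V} (h : N.adj x y) : 0 < N.m0 x :=
  lt_of_lt_of_le (N.c_pos x y h) (Summable.le_tsum (N.c_summable x) y fun b _ => N.c_nonneg x b)

lemma m0C_ne_zero (N : Network V) {x y : V} (h : N.adj x y) : ((N.m0 x : ℝ) : ℂ) ≠ 0 := by
  exact_mod_cast (N.m0_pos h).ne'

lemma summable_cC (N : Network V) (x : V) : Summable fun y => ((N.c x y : ℝ) : ℂ) :=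
  (Complex.hasSum_ofReal.mpr (N.c_summable x).hasSum).summable

lemma tsum_cC (N : Network V) (x : V) : ∑' y, ((N.c x y : ℝ) : ℂ) = ((N.m0 x : ℝ) : ℂ) :=
  ((Complex.hasSum_ofReal.mpr (N.c_summable x).hasSum).tsum_eq).trans rfl

/-! #### Case lemmas for `tilde` -/

lemma tilde_of_mem (N : Network V) (f : V → V → ℝ → ℂ) (x y : V) {t : ℝ}
    (h0 : 0 ≤ t) (h1 : t ≤ 1) : N.tilde f x y t = f x y t := by
  rw [tilde, if_pos ⟨h0, h1⟩]

lemma tilde_pos (N : Network V) (f : V → V → ℝ → ℂ) (x y : V) {t : ℝ} (ht : 0 < t) :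
    N.tilde f x y t = N.fwdExt f (⌈t⌉ - 1).toNat x y (t - ((⌈t⌉ - 1 : ℤ) : ℝ)) := by
  by_cases h1 : t ≤ 1
  · have hc : ⌈t⌉ = 1 := by
      rw [Int.ceil_eq_iff]
      constructor <;> push_cast <;> linarith
    rw [tilde, if_pos ⟨ht.le, h1⟩, hc]
    norm_num [fwdExt]
  · push_neg at h1
    rw [tilde, if_neg (fun h => h1.not_ge h.2), if_pos h1]

lemma tilde_lt_one (N : Network V) (f : V → V → ℝ → ℂ) (x y : V) {t : ℝ} (ht : t < 1) :
    N.tilde f x y t = N.bwdExt f (-⌊t⌋).toNat x y (t + ((-⌊t⌋ : ℤ) : ℝ)) := by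
  by_cases h0 : 0 ≤ t
  · have hc : ⌊t⌋ = 0 := by
      rw [Int.floor_eq_iff]
      constructor <;> push_cast <;> linarith
    rw [tilde, if_pos ⟨h0, ht.le⟩, hc]
    norm_num [bwdExt]
  · push_neg at h0
    rw [tilde, if_neg (fun h => h0.not_ge h.1), if_neg (by linarith)]

lemma fwdExt_succ (N : Network V) (f : V → V → ℝ → ℂ) (n : ℕ) (x y : V) (s : ℝ) :
    N.fwdExt f (n + 1) x y s
      = (2 / (N.m0 y) : ℂ) * ∑' v, (N.c y v : ℂ) * N.fwdExt f n y v s - N.fwdExt f n y x s := rfl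

lemma bwdExt_succ (N : Network V) (f : V → V → ℝ → ℂ) (n : ℕ) (x y : V) (s : ℝ) :
    N.bwdExt f (n + 1) x y s
      = (2 / (N.m0 x) : ℂ) * ∑' u, (N.c x u : ℂ) * N.bwdExt f n u x s - N.bwdExt f n y x s := rfl

/-- Forward recursion for `tilde`, easy case `t > 0`. -/
lemma tilde_add_one_of_pos (N : Network V) (f : V → V → ℝ → ℂ) (x y : V) {t : ℝ} (ht : 0 < t) :
    N.tilde f x y (t + 1)
      = (2 / (N.m0 y) : ℂ) * ∑' v, (N.c y v : ℂ) * N.tilde f y v t - N.tilde f y x t := by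
  have hc1 : (1:ℤ) ≤ ⌈t⌉ := Int.ceil_pos.mpr ht
  have hceil : ⌈t + 1⌉ = ⌈t⌉ + 1 := Int.ceil_add_one t
  have hn : (⌈t + 1⌉ - 1).toNat = (⌈t⌉ - 1).toNat + 1 := by omega
  have harg : t + 1 - ((⌈t + 1⌉ - 1 : ℤ) : ℝ) = t - ((⌈t⌉ - 1 : ℤ) : ℝ) := by
    rw [hceil]; push_cast; ring
  rw [N.tilde_pos f x y (by linarith : (0:ℝ) < t + 1), hn, harg, N.fwdExt_succ]
  have hv : ∀ v w, N.tilde f v w t = N.fwdExt f (⌈t⌉ - 1).toNat v w (t - ((⌈t⌉ - 1 : ℤ) : ℝ)) :=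
    fun v w => N.tilde_pos f v w ht
  simp only [hv]

/-- Backward recursion for `tilde`, easy case `t < 1`. -/
lemma tilde_sub_one_of_lt_one (N : Network V) (f : V → V → ℝ → ℂ) (x y : V) {t : ℝ} (ht : t < 1) :
    N.tilde f x y (t - 1)
      = (2 / (N.m0 x) : ℂ) * ∑' u, (N.c x u : ℂ) * N.tilde f u x t - N.tilde f y x t := by
  have hf0 : ⌊t⌋ ≤ 0 := by
    have : ⌊t⌋ < 1 := Int.floor_lt.mpr (by exact_mod_cast ht)
    omega
  have hfloor : ⌊t - 1⌋ = ⌊t⌋ - 1 := Int.floor_sub_one t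
  have hn : (-⌊t - 1⌋).toNat = (-⌊t⌋).toNat + 1 := by omega
  have harg : t - 1 + ((-⌊t - 1⌋ : ℤ) : ℝ) = t + ((-⌊t⌋ : ℤ) : ℝ) := by
    rw [hfloor]; push_cast; ring
  rw [N.tilde_lt_one f x y (by linarith : t - 1 < 1), hn, harg, N.bwdExt_succ]
  have hv : ∀ v w, N.tilde f v w t = N.bwdExt f (-⌊t⌋).toNat v w (t + ((-⌊t⌋ : ℤ) : ℝ)) :=
    fun v w => N.tilde_lt_one f v w ht
  simp only [hv]

end Network


/-! ### ENNReal toolbox -/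

section ENNRealAux

open ENNReal
open scoped NNReal

lemma two_mul_le_sq_add_sq (a b : ℝ≥0∞) : 2 * (a * b) ≤ a ^ 2 + b ^ 2 := by
  rcases eq_or_ne a 0 with rfl | ha0; · simp
  rcases eq_or_ne b 0 with rfl | hb0; · simp
  rcases eq_or_ne a ⊤ with rfl | hat
  · have h : (⊤ : ℝ≥0∞) ^ 2 + b ^ 2 = ⊤ := by simp [pow_two]
    rw [h]; exact le_top
  rcases eq_or_ne b ⊤ with rfl | hbt
  · have h : a ^ 2 + (⊤ : ℝ≥0∞) ^ 2 = ⊤ := by simp [pow_two]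
    rw [h]; exact le_top
  lift a to ℝ≥0 using hat
  lift b to ℝ≥0 using hbt
  have h : (2 : ℝ≥0) * (a * b) ≤ a ^ 2 + b ^ 2 := by
    rw [← NNReal.coe_le_coe]
    push_cast
    nlinarith [sq_nonneg ((a : ℝ) - (b : ℝ))]
  exact_mod_cast h

lemma sq_add_le (a b : ℝ≥0∞) : (a + b) ^ 2 ≤ 2 * a ^ 2 + 2 * b ^ 2 := by
  have : (a + b) ^ 2 = a ^ 2 + 2 * (a * b) + b ^ 2 := by ring
  rw [this]
  calc a ^ 2 + 2 * (a * b) + b ^ 2 ≤ a ^ 2 + (a ^ 2 + b ^ 2) + b ^ 2 := by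
        gcongr
        exact two_mul_le_sq_add_sq a b
    _ = 2 * a ^ 2 + 2 * b ^ 2 := by ring

lemma ennreal_sq_tsum {ι : Type*} (f : ι → ℝ≥0∞) :
    (∑' v, f v) ^ 2 = ∑' v, ∑' w, f v * f w := by
  rw [pow_two, ← ENNReal.tsum_mul_right]
  exact tsum_congr fun v => (ENNReal.tsum_mul_left).symm

lemma ennreal_cauchy_schwarz {ι : Type*} (a b : ι → ℝ≥0∞) :
    (∑' v, a v * b v) ^ 2 ≤ (∑' v, a v) * (∑' v, a v * (b v) ^ 2) := by
  have key : 2 * (∑' v, a v * b v) ^ 2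
      ≤ 2 * ((∑' v, a v) * (∑' v, a v * (b v) ^ 2)) := by
    calc 2 * (∑' v, a v * b v) ^ 2 = 2 * ∑' v, ∑' w, (a v * b v) * (a w * b w) := by
          rw [ennreal_sq_tsum]
      _ = ∑' v, ∑' w, 2 * ((a v * b v) * (a w * b w)) := by
          rw [← ENNReal.tsum_mul_left]
          exact tsum_congr fun v => (ENNReal.tsum_mul_left).symm
      _ ≤ ∑' v, ∑' w, (a v * a w * (b v) ^ 2 + a v * a w * (b w) ^ 2) := by
          refine Summable.tsum_le_tsum (fun v => Summable.tsum_le_tsum (fun w => ?_) ENNReal.summable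
            ENNReal.summable) ENNReal.summable ENNReal.summable
          calc 2 * ((a v * b v) * (a w * b w)) = (a v * a w) * (2 * (b v * b w)) := by ring
            _ ≤ (a v * a w) * ((b v) ^ 2 + (b w) ^ 2) := by
                gcongr
                exact two_mul_le_sq_add_sq _ _
            _ = a v * a w * (b v) ^ 2 + a v * a w * (b w) ^ 2 := by ring
      _ = (∑' v, ∑' w, a v * a w * (b v) ^ 2) + ∑' v, ∑' w, a v * a w * (b w) ^ 2 := by
          rw [← ENNReal.tsum_add]
          exact tsum_congr fun v => ENNReal.tsum_add
      _ = 2 * ((∑' v, a v) * (∑' v, a v * (b v) ^ 2)) := by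
          have h1 : (∑' v, ∑' w, a v * a w * (b v) ^ 2)
              = (∑' v, a v * (b v) ^ 2) * (∑' w, a w) := by
            rw [← ENNReal.tsum_mul_right]
            exact tsum_congr fun v => by
              rw [← ENNReal.tsum_mul_left]
              exact tsum_congr fun w => by ring
          have h2 : (∑' v, ∑' w, a v * a w * (b w) ^ 2)
              = (∑' v, a v) * (∑' w, a w * (b w) ^ 2) := by
            rw [← ENNReal.tsum_mul_right]
            exact tsum_congr fun v => by
              rw [← ENNReal.tsum_mul_left]
              exact tsum_congr fun w => by ring
          rw [h1, h2]; ring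
  have h2 : (2 : ℝ≥0∞) ≠ 0 := by norm_num
  have h2' : (2 : ℝ≥0∞) ≠ ⊤ := by norm_num
  exact (ENNReal.mul_le_mul_iff_right h2 h2').mp key

lemma coe_nnnorm_tsum_le {ι : Type*} (z : ι → ℂ) :
    (‖∑' v, z v‖₊ : ℝ≥0∞) ≤ ∑' v, (‖z v‖₊ : ℝ≥0∞) := by
  by_cases h : Summable fun v => ‖z v‖₊
  · rw [← ENNReal.coe_tsum h]
    exact_mod_cast nnnorm_tsum_le h
  · have : ∑' v, (‖z v‖₊ : ℝ≥0∞) = ⊤ := by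
      by_contra h'
      exact h (ENNReal.tsum_coe_ne_top_iff_summable.mp h')
    simp [this]

lemma summable_of_tsum_ofReal_ne_top {ι : Type*} {f : ι → ℝ} (hf : ∀ v, 0 ≤ f v)
    (h : ∑' v, ENNReal.ofReal (f v) ≠ ⊤) : Summable f := by
  have h1 : ∀ v, ENNReal.ofReal (f v) = ((f v).toNNReal : ℝ≥0∞) := fun v => rfl
  rw [tsum_congr h1] at h
  have h2 : Summable fun v => (f v).toNNReal := ENNReal.tsum_coe_ne_top_iff_summable.mp h
  have h3 : Summable fun v => ((f v).toNNReal : ℝ) := NNReal.summable_coe.mpr h2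
  refine h3.congr fun v => ?_
  exact Real.coe_toNNReal _ (hf v)

lemma ofReal_mul_sq_eq (c : ℝ) (hc : 0 ≤ c) (a : ℂ) :
    ENNReal.ofReal (c * ‖a‖ ^ 2) = ENNReal.ofReal c * (‖a‖₊ : ℝ≥0∞) ^ 2 := by
  rw [ENNReal.ofReal_mul hc, ENNReal.ofReal_pow (norm_nonneg a), ofReal_norm, enorm_eq_nnnorm]

end ENNRealAux

namespace Network

variable {V : Type} [Countable V] [MeasurableSpace V] [DiscreteMeasurableSpace V]

/-- Weighted `ℓ²`-sum over the edges at a fixed point `s`. -/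
def sqSum (N : Network V) (g : V → V → ℝ → ℂ) (s : ℝ) : ℝ≥0∞ :=
  ∑' e : V × V, ENNReal.ofReal (N.c e.1 e.2) * (‖g e.1 e.2 s‖₊ : ℝ≥0∞) ^ 2

lemma tsum_ofReal_c (N : Network V) (x : V) :
    ∑' y, ENNReal.ofReal (N.c x y) = ENNReal.ofReal (N.m0 x) :=
  (ENNReal.ofReal_tsum_of_nonneg (fun y => N.c_nonneg x y) (N.c_summable x)).symm

lemma tsum_ofReal_c' (N : Network V) (y : V) :
    ∑' x, ENNReal.ofReal (N.c x y) = ENNReal.ofReal (N.m0 y) := by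
  rw [tsum_congr fun x => by rw [N.c_symm x y]]
  exact N.tsum_ofReal_c y

/-- Local summability from finiteness of the weighted `ℓ²`-sum: second index varying. -/
lemma summable_cmul₂ (N : Network V) {g : V → V → ℝ → ℂ} {s : ℝ}
    (hg : N.sqSum g s ≠ ⊤) (y : V) :
    Summable fun v => (N.c y v : ℂ) * g y v s := by
  have hsub : ∑' v, ENNReal.ofReal (N.c y v * ‖g y v s‖ ^ 2) ≠ ⊤ := by
    refine ne_top_of_le_ne_top hg ?_
    have := tsum_comp_le_tsum_of_injective
      (f := fun v : V => ((y, v) : V × V)) (fun a b h => by simpa using congrArg Prod.snd h)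
      (fun e : V × V => ENNReal.ofReal (N.c e.1 e.2) * (‖g e.1 e.2 s‖₊ : ℝ≥0∞) ^ 2)
    refine le_trans (le_of_eq (tsum_congr fun v => ?_)) this
    exact ofReal_mul_sq_eq _ (N.c_nonneg y v) _
  have h2 : Summable fun v => N.c y v * ‖g y v s‖ ^ 2 :=
    summable_of_tsum_ofReal_ne_top
      (fun v => mul_nonneg (N.c_nonneg y v) (sq_nonneg _)) hsub
  have h3 : Summable fun v => N.c y v * ‖g y v s‖ := by
    refine Summable.of_nonneg_of_le
      (fun v => mul_nonneg (N.c_nonneg y v) (norm_nonneg _))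
      (fun v => ?_) ((N.c_summable y).add h2)
    have hb : ‖g y v s‖ ≤ 1 + ‖g y v s‖ ^ 2 := by nlinarith [sq_nonneg (‖g y v s‖ - 1)]
    calc N.c y v * ‖g y v s‖ ≤ N.c y v * (1 + ‖g y v s‖ ^ 2) := by
          exact mul_le_mul_of_nonneg_left hb (N.c_nonneg y v)
      _ = N.c y v + N.c y v * ‖g y v s‖ ^ 2 := by ring
  refine Summable.of_norm ?_
  refine h3.congr fun v => ?_
  rw [norm_mul, Complex.norm_real, Real.norm_of_nonneg (N.c_nonneg y v)]

/-- Local summability from finiteness of the weighted `ℓ²`-sum: first index varying. -/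
lemma summable_cmul₁ (N : Network V) {g : V → V → ℝ → ℂ} {s : ℝ}
    (hg : N.sqSum g s ≠ ⊤) (y : V) :
    Summable fun v => (N.c y v : ℂ) * g v y s := by
  have hsub : ∑' v, ENNReal.ofReal (N.c y v * ‖g v y s‖ ^ 2) ≠ ⊤ := by
    refine ne_top_of_le_ne_top hg ?_
    have := tsum_comp_le_tsum_of_injective
      (f := fun v : V => ((v, y) : V × V)) (fun a b h => by simpa using congrArg Prod.fst h)
      (fun e : V × V => ENNReal.ofReal (N.c e.1 e.2) * (‖g e.1 e.2 s‖₊ : ℝ≥0∞) ^ 2)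
    refine le_trans (le_of_eq (tsum_congr fun v => ?_)) this
    rw [N.c_symm y v]
    exact ofReal_mul_sq_eq _ (N.c_nonneg v y) _
  have h2 : Summable fun v => N.c y v * ‖g v y s‖ ^ 2 :=
    summable_of_tsum_ofReal_ne_top
      (fun v => mul_nonneg (N.c_nonneg y v) (sq_nonneg _)) hsub
  have h3 : Summable fun v => N.c y v * ‖g v y s‖ := by
    refine Summable.of_nonneg_of_le
      (fun v => mul_nonneg (N.c_nonneg y v) (norm_nonneg _))
      (fun v => ?_) ((N.c_summable y).add h2)
    have hb : ‖g v y s‖ ≤ 1 + ‖g v y s‖ ^ 2 := by nlinarith [sq_nonneg (‖g v y s‖ - 1)]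
    calc N.c y v * ‖g v y s‖ ≤ N.c y v * (1 + ‖g v y s‖ ^ 2) := by
          exact mul_le_mul_of_nonneg_left hb (N.c_nonneg y v)
      _ = N.c y v + N.c y v * ‖g v y s‖ ^ 2 := by ring
  refine Summable.of_norm ?_
  refine h3.congr fun v => ?_
  rw [norm_mul, Complex.norm_real, Real.norm_of_nonneg (N.c_nonneg y v)]

end Network


namespace Network

variable {V : Type} [Countable V] [MeasurableSpace V] [DiscreteMeasurableSpace V]

lemma tsum_prod_swap (h : V → V → ℝ≥0∞) :
    ∑' e : V × V, h e.1 e.2 = ∑' e : V × V, h e.2 e.1 :=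
  ((Equiv.prodComm V V).tsum_eq (fun e : V × V => h e.1 e.2)).symm

lemma vertex_estimate (N : Network V) (a : V) (g : V → ℂ) :
    ENNReal.ofReal (N.m0 a)
        * (‖(2 / (N.m0 a) : ℂ) * ∑' v, (N.c a v : ℂ) * g v‖₊ : ℝ≥0∞) ^ 2
      ≤ 4 * ∑' v, ENNReal.ofReal (N.c a v) * (‖g v‖₊ : ℝ≥0∞) ^ 2 := by
  rcases eq_or_lt_of_le (N.m0_nonneg a) with hm | hm
  · rw [← hm]; simp
  have hm' : N.m0 a ≠ 0 := hm.ne'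
  set W : ℝ≥0∞ := ∑' v, ENNReal.ofReal (N.c a v) * (‖g v‖₊ : ℝ≥0∞) with hWdef
  set U : ℝ≥0∞ := ∑' v, ENNReal.ofReal (N.c a v) * (‖g v‖₊ : ℝ≥0∞) ^ 2 with hUdef
  have hterm : ∀ v, (‖(N.c a v : ℂ) * g v‖₊ : ℝ≥0∞)
      = ENNReal.ofReal (N.c a v) * (‖g v‖₊ : ℝ≥0∞) := by
    intro v
    rw [nnnorm_mul, ENNReal.coe_mul]
    congr 1
    rw [← enorm_eq_nnnorm, ← ofReal_norm, Complex.norm_real, Real.norm_of_nonneg (N.c_nonneg a v)]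
  have hW : (‖∑' v, (N.c a v : ℂ) * g v‖₊ : ℝ≥0∞) ≤ W :=
    le_trans (coe_nnnorm_tsum_le _) (le_of_eq (tsum_congr hterm))
  have hconst : (‖(2 / (N.m0 a) : ℂ)‖₊ : ℝ≥0∞) = ENNReal.ofReal (2 / N.m0 a) := by
    rw [← enorm_eq_nnnorm, ← ofReal_norm]
    congr 1
    rw [norm_div, Complex.norm_real, Real.norm_of_nonneg (N.m0_nonneg a)]
    norm_num
  have hCS : W ^ 2 ≤ ENNReal.ofReal (N.m0 a) * U := by
    rw [← N.tsum_ofReal_c a]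
    exact ennreal_cauchy_schwarz _ _
  calc ENNReal.ofReal (N.m0 a)
        * (‖(2 / (N.m0 a) : ℂ) * ∑' v, (N.c a v : ℂ) * g v‖₊ : ℝ≥0∞) ^ 2
      = ENNReal.ofReal (N.m0 a)
        * ((‖(2 / (N.m0 a) : ℂ)‖₊ : ℝ≥0∞) * (‖∑' v, (N.c a v : ℂ) * g v‖₊ : ℝ≥0∞)) ^ 2 := by
        rw [nnnorm_mul, ENNReal.coe_mul]
    _ ≤ ENNReal.ofReal (N.m0 a) * (ENNReal.ofReal (2 / N.m0 a) * W) ^ 2 := by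
        rw [hconst]; gcongr
    _ = ENNReal.ofReal (N.m0 a) * ENNReal.ofReal (2 / N.m0 a) ^ 2 * W ^ 2 := by ring
    _ ≤ ENNReal.ofReal (N.m0 a) * ENNReal.ofReal (2 / N.m0 a) ^ 2
          * (ENNReal.ofReal (N.m0 a) * U) := by gcongr
    _ = (ENNReal.ofReal (N.m0 a) * ENNReal.ofReal (2 / N.m0 a) ^ 2
          * ENNReal.ofReal (N.m0 a)) * U := by ring
    _ = 4 * U := by
        congr 1
        rw [← ENNReal.ofReal_pow (by positivity), ← ENNReal.ofReal_mul (N.m0_nonneg a),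
          ← ENNReal.ofReal_mul (by positivity)]
        rw [show N.m0 a * (2 / N.m0 a) ^ 2 * N.m0 a = 4 by field_simp; ring]
        norm_num

lemma sqSum_fwdStep_le (N : Network V) (g : V → V → ℝ → ℂ) (s : ℝ) :
    N.sqSum (fun x y u => (2 / (N.m0 y) : ℂ) * ∑' v, (N.c y v : ℂ) * g y v u - g y x u) s
      ≤ 10 * N.sqSum g s := by
  set T : V → ℂ := fun y => (2 / (N.m0 y) : ℂ) * ∑' v, (N.c y v : ℂ) * g y v s with hT
  have hsplit : ∀ e : V × V,
      ENNReal.ofReal (N.c e.1 e.2) * (‖T e.2 - g e.2 e.1 s‖₊ : ℝ≥0∞) ^ 2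
        ≤ 2 * (ENNReal.ofReal (N.c e.1 e.2) * (‖T e.2‖₊ : ℝ≥0∞) ^ 2)
          + 2 * (ENNReal.ofReal (N.c e.1 e.2) * (‖g e.2 e.1 s‖₊ : ℝ≥0∞) ^ 2) := by
    intro e
    calc ENNReal.ofReal (N.c e.1 e.2) * (‖T e.2 - g e.2 e.1 s‖₊ : ℝ≥0∞) ^ 2
        ≤ ENNReal.ofReal (N.c e.1 e.2)
            * ((‖T e.2‖₊ : ℝ≥0∞) + (‖g e.2 e.1 s‖₊ : ℝ≥0∞)) ^ 2 := by
          gcongr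
          exact_mod_cast nnnorm_sub_le _ _
      _ ≤ ENNReal.ofReal (N.c e.1 e.2)
            * (2 * (‖T e.2‖₊ : ℝ≥0∞) ^ 2 + 2 * (‖g e.2 e.1 s‖₊ : ℝ≥0∞) ^ 2) := by
          gcongr
          exact sq_add_le _ _
      _ = 2 * (ENNReal.ofReal (N.c e.1 e.2) * (‖T e.2‖₊ : ℝ≥0∞) ^ 2)
          + 2 * (ENNReal.ofReal (N.c e.1 e.2) * (‖g e.2 e.1 s‖₊ : ℝ≥0∞) ^ 2) := by ring
  have hA : (∑' e : V × V, ENNReal.ofReal (N.c e.1 e.2) * (‖T e.2‖₊ : ℝ≥0∞) ^ 2)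
      ≤ 4 * N.sqSum g s := by
    rw [ENNReal.tsum_prod', ENNReal.tsum_comm]
    calc ∑' y, ∑' x, ENNReal.ofReal (N.c x y) * (‖T y‖₊ : ℝ≥0∞) ^ 2
        = ∑' y, ENNReal.ofReal (N.m0 y) * (‖T y‖₊ : ℝ≥0∞) ^ 2 := by
          refine tsum_congr fun y => ?_
          rw [ENNReal.tsum_mul_right, N.tsum_ofReal_c' y]
      _ ≤ ∑' y, 4 * ∑' v, ENNReal.ofReal (N.c y v) * (‖g y v s‖₊ : ℝ≥0∞) ^ 2 := by
          refine Summable.tsum_le_tsum (fun y => N.vertex_estimate y (fun v => g y v s))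
            ENNReal.summable ENNReal.summable
      _ = 4 * N.sqSum g s := by
          rw [ENNReal.tsum_mul_left, sqSum, ENNReal.tsum_prod']
  have hB : (∑' e : V × V, ENNReal.ofReal (N.c e.1 e.2) * (‖g e.2 e.1 s‖₊ : ℝ≥0∞) ^ 2)
      = N.sqSum g s := by
    calc ∑' e : V × V, ENNReal.ofReal (N.c e.1 e.2) * (‖g e.2 e.1 s‖₊ : ℝ≥0∞) ^ 2
        = ∑' e : V × V, ENNReal.ofReal (N.c e.2 e.1) * (‖g e.2 e.1 s‖₊ : ℝ≥0∞) ^ 2 :=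
          tsum_congr fun e => by rw [N.c_symm e.1 e.2]
      _ = N.sqSum g s :=
          (tsum_prod_swap fun a b => ENNReal.ofReal (N.c a b) * (‖g a b s‖₊ : ℝ≥0∞) ^ 2).symm
  calc N.sqSum (fun x y u => (2 / (N.m0 y) : ℂ) * ∑' v, (N.c y v : ℂ) * g y v u - g y x u) s
      ≤ ∑' e : V × V,
          (2 * (ENNReal.ofReal (N.c e.1 e.2) * (‖T e.2‖₊ : ℝ≥0∞) ^ 2)
            + 2 * (ENNReal.ofReal (N.c e.1 e.2) * (‖g e.2 e.1 s‖₊ : ℝ≥0∞) ^ 2)) :=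
        Summable.tsum_le_tsum hsplit ENNReal.summable ENNReal.summable
    _ = 2 * (∑' e : V × V, ENNReal.ofReal (N.c e.1 e.2) * (‖T e.2‖₊ : ℝ≥0∞) ^ 2)
        + 2 * ∑' e : V × V, ENNReal.ofReal (N.c e.1 e.2) * (‖g e.2 e.1 s‖₊ : ℝ≥0∞) ^ 2 := by
        rw [ENNReal.tsum_add, ENNReal.tsum_mul_left, ENNReal.tsum_mul_left]
    _ ≤ 2 * (4 * N.sqSum g s) + 2 * N.sqSum g s := by
        rw [hB]; gcongr
    _ = 10 * N.sqSum g s := by ring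

lemma sqSum_bwdStep_le (N : Network V) (g : V → V → ℝ → ℂ) (s : ℝ) :
    N.sqSum (fun x y u => (2 / (N.m0 x) : ℂ) * ∑' v, (N.c x v : ℂ) * g v x u - g y x u) s
      ≤ 10 * N.sqSum g s := by
  set T : V → ℂ := fun x => (2 / (N.m0 x) : ℂ) * ∑' v, (N.c x v : ℂ) * g v x s with hT
  have hsplit : ∀ e : V × V,
      ENNReal.ofReal (N.c e.1 e.2) * (‖T e.1 - g e.2 e.1 s‖₊ : ℝ≥0∞) ^ 2
        ≤ 2 * (ENNReal.ofReal (N.c e.1 e.2) * (‖T e.1‖₊ : ℝ≥0∞) ^ 2)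
          + 2 * (ENNReal.ofReal (N.c e.1 e.2) * (‖g e.2 e.1 s‖₊ : ℝ≥0∞) ^ 2) := by
    intro e
    calc ENNReal.ofReal (N.c e.1 e.2) * (‖T e.1 - g e.2 e.1 s‖₊ : ℝ≥0∞) ^ 2
        ≤ ENNReal.ofReal (N.c e.1 e.2)
            * ((‖T e.1‖₊ : ℝ≥0∞) + (‖g e.2 e.1 s‖₊ : ℝ≥0∞)) ^ 2 := by
          gcongr
          exact_mod_cast nnnorm_sub_le _ _
      _ ≤ ENNReal.ofReal (N.c e.1 e.2)
            * (2 * (‖T e.1‖₊ : ℝ≥0∞) ^ 2 + 2 * (‖g e.2 e.1 s‖₊ : ℝ≥0∞) ^ 2) := by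
          gcongr
          exact sq_add_le _ _
      _ = 2 * (ENNReal.ofReal (N.c e.1 e.2) * (‖T e.1‖₊ : ℝ≥0∞) ^ 2)
          + 2 * (ENNReal.ofReal (N.c e.1 e.2) * (‖g e.2 e.1 s‖₊ : ℝ≥0∞) ^ 2) := by ring
  have hA : (∑' e : V × V, ENNReal.ofReal (N.c e.1 e.2) * (‖T e.1‖₊ : ℝ≥0∞) ^ 2)
      ≤ 4 * N.sqSum g s := by
    rw [ENNReal.tsum_prod']
    calc ∑' x, ∑' y, ENNReal.ofReal (N.c x y) * (‖T x‖₊ : ℝ≥0∞) ^ 2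
        = ∑' x, ENNReal.ofReal (N.m0 x) * (‖T x‖₊ : ℝ≥0∞) ^ 2 := by
          refine tsum_congr fun x => ?_
          rw [ENNReal.tsum_mul_right, N.tsum_ofReal_c x]
      _ ≤ ∑' x, 4 * ∑' v, ENNReal.ofReal (N.c x v) * (‖g v x s‖₊ : ℝ≥0∞) ^ 2 := by
          refine Summable.tsum_le_tsum (fun x => N.vertex_estimate x (fun v => g v x s))
            ENNReal.summable ENNReal.summable
      _ = 4 * N.sqSum g s := by
          rw [ENNReal.tsum_mul_left]
          congr 1
          calc ∑' x, ∑' v, ENNReal.ofReal (N.c x v) * (‖g v x s‖₊ : ℝ≥0∞) ^ 2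
              = ∑' e : V × V, ENNReal.ofReal (N.c e.1 e.2) * (‖g e.2 e.1 s‖₊ : ℝ≥0∞) ^ 2 :=
                (ENNReal.tsum_prod' (f := fun e : V × V =>
                  ENNReal.ofReal (N.c e.1 e.2) * (‖g e.2 e.1 s‖₊ : ℝ≥0∞) ^ 2)).symm
            _ = ∑' e : V × V, ENNReal.ofReal (N.c e.2 e.1) * (‖g e.2 e.1 s‖₊ : ℝ≥0∞) ^ 2 :=
                tsum_congr fun e => by rw [N.c_symm e.1 e.2]
            _ = N.sqSum g s :=
                (tsum_prod_swap fun a b =>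
                  ENNReal.ofReal (N.c a b) * (‖g a b s‖₊ : ℝ≥0∞) ^ 2).symm
  have hB : (∑' e : V × V, ENNReal.ofReal (N.c e.1 e.2) * (‖g e.2 e.1 s‖₊ : ℝ≥0∞) ^ 2)
      = N.sqSum g s := by
    calc ∑' e : V × V, ENNReal.ofReal (N.c e.1 e.2) * (‖g e.2 e.1 s‖₊ : ℝ≥0∞) ^ 2
        = ∑' e : V × V, ENNReal.ofReal (N.c e.2 e.1) * (‖g e.2 e.1 s‖₊ : ℝ≥0∞) ^ 2 :=
          tsum_congr fun e => by rw [N.c_symm e.1 e.2]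
      _ = N.sqSum g s :=
          (tsum_prod_swap fun a b => ENNReal.ofReal (N.c a b) * (‖g a b s‖₊ : ℝ≥0∞) ^ 2).symm
  calc N.sqSum (fun x y u => (2 / (N.m0 x) : ℂ) * ∑' v, (N.c x v : ℂ) * g v x u - g y x u) s
      ≤ ∑' e : V × V,
          (2 * (ENNReal.ofReal (N.c e.1 e.2) * (‖T e.1‖₊ : ℝ≥0∞) ^ 2)
            + 2 * (ENNReal.ofReal (N.c e.1 e.2) * (‖g e.2 e.1 s‖₊ : ℝ≥0∞) ^ 2)) :=
        Summable.tsum_le_tsum hsplit ENNReal.summable ENNReal.summable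
    _ = 2 * (∑' e : V × V, ENNReal.ofReal (N.c e.1 e.2) * (‖T e.1‖₊ : ℝ≥0∞) ^ 2)
        + 2 * ∑' e : V × V, ENNReal.ofReal (N.c e.1 e.2) * (‖g e.2 e.1 s‖₊ : ℝ≥0∞) ^ 2 := by
        rw [ENNReal.tsum_add, ENNReal.tsum_mul_left, ENNReal.tsum_mul_left]
    _ ≤ 2 * (4 * N.sqSum g s) + 2 * N.sqSum g s := by
        rw [hB]; gcongr
    _ = 10 * N.sqSum g s := by ring

lemma sqSum_fwdExt_ne_top (N : Network V) {f : V → V → ℝ → ℂ}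
    (hf : ∀ u, N.sqSum f u ≠ ⊤) : ∀ n, ∀ u, N.sqSum (N.fwdExt f n) u ≠ ⊤ := by
  intro n
  induction n with
  | zero => exact hf
  | succ n ih =>
    intro u
    have heq : N.fwdExt f (n + 1)
        = fun x y s => (2 / (N.m0 y) : ℂ) * ∑' v, (N.c y v : ℂ) * N.fwdExt f n y v s
            - N.fwdExt f n y x s := rfl
    rw [heq]
    exact ne_top_of_le_ne_top
      (ENNReal.mul_ne_top (by norm_num) (ih u)) (N.sqSum_fwdStep_le _ u)

lemma sqSum_bwdExt_ne_top (N : Network V) {f : V → V → ℝ → ℂ}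
    (hf : ∀ u, N.sqSum f u ≠ ⊤) : ∀ n, ∀ u, N.sqSum (N.bwdExt f n) u ≠ ⊤ := by
  intro n
  induction n with
  | zero => exact hf
  | succ n ih =>
    intro u
    have heq : N.bwdExt f (n + 1)
        = fun x y s => (2 / (N.m0 x) : ℂ) * ∑' v, (N.c x v : ℂ) * N.bwdExt f n v x s
            - N.bwdExt f n y x s := rfl
    rw [heq]
    exact ne_top_of_le_ne_top
      (ENNReal.mul_ne_top (by norm_num) (ih u)) (N.sqSum_bwdStep_le _ u)

end Network


namespace Network

variable {V : Type} [Countable V] [MeasurableSpace V] [DiscreteMeasurableSpace V]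

lemma bwd_invert (N : Network V) {f : V → V → ℝ → ℂ} {m : ℕ} {s : ℝ} {x y : V}
    (hxy : N.adj x y)
    (hS : Summable fun u => (N.c y u : ℂ) * N.bwdExt f m u y s) :
    N.bwdExt f m x y s
      = (2 / (N.m0 y) : ℂ) * ∑' v, (N.c y v : ℂ) * N.bwdExt f (m + 1) y v s
        - N.bwdExt f (m + 1) y x s := by
  have hM : ((N.m0 y : ℝ) : ℂ) ≠ 0 := N.m0C_ne_zero (N.adj_symm x y hxy)
  set S : ℂ := ∑' u, (N.c y u : ℂ) * N.bwdExt f m u y s with hSdef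
  have hexp : ∀ v, N.bwdExt f (m + 1) y v s
      = (2 / (N.m0 y) : ℂ) * S - N.bwdExt f m v y s := fun v => rfl
  have hsplit : ∑' v, (N.c y v : ℂ) * ((2 / (N.m0 y) : ℂ) * S - N.bwdExt f m v y s)
      = ((N.m0 y : ℝ) : ℂ) * ((2 / (N.m0 y) : ℂ) * S) - S := by
    have h1 : ∀ v, (N.c y v : ℂ) * ((2 / (N.m0 y) : ℂ) * S - N.bwdExt f m v y s)
        = (N.c y v : ℂ) * ((2 / (N.m0 y) : ℂ) * S) - (N.c y v : ℂ) * N.bwdExt f m v y s :=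
      fun v => by ring
    rw [tsum_congr h1, Summable.tsum_sub ((N.summable_cC y).mul_right _) hS, tsum_mul_right,
      N.tsum_cC y, ← hSdef]
  simp only [hexp]
  rw [hsplit]
  field_simp
  ring

lemma fwd_invert (N : Network V) {f : V → V → ℝ → ℂ} {n : ℕ} {s : ℝ} {x y : V}
    (hxy : N.adj x y)
    (hS : Summable fun w => (N.c x w : ℂ) * N.fwdExt f n x w s) :
    N.fwdExt f n x y s
      = (2 / (N.m0 x) : ℂ) * ∑' u, (N.c x u : ℂ) * N.fwdExt f (n + 1) u x s
        - N.fwdExt f (n + 1) y x s := by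
  have hM : ((N.m0 x : ℝ) : ℂ) ≠ 0 := N.m0C_ne_zero hxy
  set S : ℂ := ∑' w, (N.c x w : ℂ) * N.fwdExt f n x w s with hSdef
  have hexp : ∀ u, N.fwdExt f (n + 1) u x s
      = (2 / (N.m0 x) : ℂ) * S - N.fwdExt f n x u s := fun u => rfl
  have hsplit : ∑' u, (N.c x u : ℂ) * ((2 / (N.m0 x) : ℂ) * S - N.fwdExt f n x u s)
      = ((N.m0 x : ℝ) : ℂ) * ((2 / (N.m0 x) : ℂ) * S) - S := by
    have h1 : ∀ u, (N.c x u : ℂ) * ((2 / (N.m0 x) : ℂ) * S - N.fwdExt f n x u s)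
        = (N.c x u : ℂ) * ((2 / (N.m0 x) : ℂ) * S) - (N.c x u : ℂ) * N.fwdExt f n x u s :=
      fun u => by ring
    rw [tsum_congr h1, Summable.tsum_sub ((N.summable_cC x).mul_right _) hS, tsum_mul_right,
      N.tsum_cC x, ← hSdef]
  simp only [hexp]
  rw [hsplit]
  field_simp
  ring

lemma tilde_add_one_of_neg (N : Network V) {f : V → V → ℝ → ℂ}
    (hf : ∀ u, N.sqSum f u ≠ ⊤) {x y : V} (hxy : N.adj x y) {t : ℝ} (ht : t < 0) :
    N.tilde f x y (t + 1)
      = (2 / (N.m0 y) : ℂ) * ∑' v, (N.c y v : ℂ) * N.tilde f y v t - N.tilde f y x t := by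
  have hfl : ⌊t⌋ < 0 := Int.floor_lt.mpr (by exact_mod_cast ht)
  have hfl1 : ⌊t + 1⌋ = ⌊t⌋ + 1 := Int.floor_add_one t
  have hm : (-⌊t + 1⌋).toNat + 1 = (-⌊t⌋).toNat := by omega
  have harg : t + 1 + ((-⌊t + 1⌋ : ℤ) : ℝ) = t + ((-⌊t⌋ : ℤ) : ℝ) := by
    rw [hfl1]; push_cast; ring
  rw [N.tilde_lt_one f x y (by linarith : t + 1 < 1), harg]
  have hv : ∀ v w, N.tilde f v w t
      = N.bwdExt f ((-⌊t + 1⌋).toNat + 1) v w (t + ((-⌊t⌋ : ℤ) : ℝ)) := by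
    intro v w; rw [N.tilde_lt_one f v w (by linarith : t < 1), hm]
  simp only [hv]
  exact N.bwd_invert hxy (N.summable_cmul₁ (N.sqSum_bwdExt_ne_top hf _ _) y)

lemma tilde_sub_one_of_gt_one (N : Network V) {f : V → V → ℝ → ℂ}
    (hf : ∀ u, N.sqSum f u ≠ ⊤) {x y : V} (hxy : N.adj x y) {t : ℝ} (ht : 1 < t) :
    N.tilde f x y (t - 1)
      = (2 / (N.m0 x) : ℂ) * ∑' u, (N.c x u : ℂ) * N.tilde f u x t - N.tilde f y x t := by
  have hc : 1 < ⌈t⌉ := Int.lt_ceil.mpr (by exact_mod_cast ht)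
  have hc1 : ⌈t - 1⌉ = ⌈t⌉ - 1 := by
    rw [show (1:ℝ) = ((1:ℤ) : ℝ) by norm_num, Int.ceil_sub_intCast]
  have hn : (⌈t - 1⌉ - 1).toNat + 1 = (⌈t⌉ - 1).toNat := by omega
  have harg : t - 1 - ((⌈t - 1⌉ - 1 : ℤ) : ℝ) = t - ((⌈t⌉ - 1 : ℤ) : ℝ) := by
    rw [hc1]; push_cast; ring
  rw [N.tilde_pos f x y (by linarith : (0:ℝ) < t - 1), harg]
  have hv : ∀ v w, N.tilde f v w t
      = N.fwdExt f ((⌈t - 1⌉ - 1).toNat + 1) v w (t - ((⌈t⌉ - 1 : ℤ) : ℝ)) := by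
    intro v w; rw [N.tilde_pos f v w (by linarith : (0:ℝ) < t), hn]
  simp only [hv]
  exact N.fwd_invert hxy (N.summable_cmul₂ (N.sqSum_fwdExt_ne_top hf _ _) x)

lemma tilde_rec_fwd (N : Network V) {f : V → V → ℝ → ℂ}
    (hf : ∀ u, N.sqSum f u ≠ ⊤) {x y : V} (hxy : N.adj x y) {t : ℝ} (ht : t ≠ 0) :
    N.tilde f x y (t + 1)
      = (2 / (N.m0 y) : ℂ) * ∑' v, (N.c y v : ℂ) * N.tilde f y v t - N.tilde f y x t := by
  rcases lt_or_gt_of_ne ht with h | h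
  · exact N.tilde_add_one_of_neg hf hxy h
  · exact N.tilde_add_one_of_pos f x y h

lemma tilde_rec_bwd (N : Network V) {f : V → V → ℝ → ℂ}
    (hf : ∀ u, N.sqSum f u ≠ ⊤) {x y : V} (hxy : N.adj x y) {t : ℝ} (ht : t ≠ 1) :
    N.tilde f x y (t - 1)
      = (2 / (N.m0 x) : ℂ) * ∑' u, (N.c x u : ℂ) * N.tilde f u x t - N.tilde f y x t := by
  rcases lt_or_gt_of_ne ht with h | h
  · exact N.tilde_sub_one_of_lt_one f x y h
  · exact N.tilde_sub_one_of_gt_one hf hxy h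

lemma summable_c_tilde₂ (N : Network V) {f : V → V → ℝ → ℂ}
    (hf : ∀ u, N.sqSum f u ≠ ⊤) (y : V) (t : ℝ) :
    Summable fun v => (N.c y v : ℂ) * N.tilde f y v t := by
  rcases lt_or_ge 0 t with ht | ht
  · have hv : ∀ v, N.tilde f y v t
        = N.fwdExt f (⌈t⌉ - 1).toNat y v (t - ((⌈t⌉ - 1 : ℤ) : ℝ)) :=
      fun v => N.tilde_pos f y v ht
    simp only [hv]
    exact N.summable_cmul₂ (N.sqSum_fwdExt_ne_top hf _ _) y
  · have hv : ∀ v, N.tilde f y v t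
        = N.bwdExt f (-⌊t⌋).toNat y v (t + ((-⌊t⌋ : ℤ) : ℝ)) :=
      fun v => N.tilde_lt_one f y v (by linarith)
    simp only [hv]
    exact N.summable_cmul₂ (N.sqSum_bwdExt_ne_top hf _ _) y

lemma summable_c_tilde₁ (N : Network V) {f : V → V → ℝ → ℂ}
    (hf : ∀ u, N.sqSum f u ≠ ⊤) (y : V) (t : ℝ) :
    Summable fun v => (N.c y v : ℂ) * N.tilde f v y t := by
  rcases lt_or_ge 0 t with ht | ht
  · have hv : ∀ v, N.tilde f v y t
        = N.fwdExt f (⌈t⌉ - 1).toNat v y (t - ((⌈t⌉ - 1 : ℤ) : ℝ)) :=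
      fun v => N.tilde_pos f v y ht
    simp only [hv]
    exact N.summable_cmul₁ (N.sqSum_fwdExt_ne_top hf _ _) y
  · have hv : ∀ v, N.tilde f v y t
        = N.bwdExt f (-⌊t⌋).toNat v y (t + ((-⌊t⌋ : ℤ) : ℝ)) :=
      fun v => N.tilde_lt_one f v y (by linarith)
    simp only [hv]
    exact N.summable_cmul₁ (N.sqSum_bwdExt_ne_top hf _ _) y

lemma dAl_rec_fwd (N : Network V) {f : V → V → ℝ → ℂ}
    (hf : ∀ u, N.sqSum f u ≠ ⊤) {τ : ℝ} {x y : V} (hxy : N.adj x y) {t : ℝ}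
    (h1 : t + τ ≠ 0) (h2 : t - τ ≠ 0) :
    N.dAlembertFun f τ x y (t + 1)
      = (2 / (N.m0 y) : ℂ) * ∑' v, (N.c y v : ℂ) * N.dAlembertFun f τ y v t
        - N.dAlembertFun f τ y x t := by
  have e1 : t + 1 + τ = (t + τ) + 1 := by ring
  have e2 : t + 1 - τ = (t - τ) + 1 := by ring
  unfold dAlembertFun
  rw [e1, e2, N.tilde_rec_fwd hf hxy h1, N.tilde_rec_fwd hf hxy h2]
  have hs1 := N.summable_c_tilde₂ hf y (t + τ)
  have hs2 := N.summable_c_tilde₂ hf y (t - τ)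
  have hsum : ∑' v, (N.c y v : ℂ) * ((N.tilde f y v (t + τ) + N.tilde f y v (t - τ)) / 2)
      = ((∑' v, (N.c y v : ℂ) * N.tilde f y v (t + τ))
          + ∑' v, (N.c y v : ℂ) * N.tilde f y v (t - τ)) / 2 := by
    have h1' : ∀ v, (N.c y v : ℂ) * ((N.tilde f y v (t + τ) + N.tilde f y v (t - τ)) / 2)
        = ((N.c y v : ℂ) * N.tilde f y v (t + τ)
            + (N.c y v : ℂ) * N.tilde f y v (t - τ)) / 2 := fun v => by ring
    rw [tsum_congr h1', tsum_div_const, Summable.tsum_add hs1 hs2]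
  rw [hsum]
  ring

lemma dAl_rec_bwd (N : Network V) {f : V → V → ℝ → ℂ}
    (hf : ∀ u, N.sqSum f u ≠ ⊤) {τ : ℝ} {x y : V} (hxy : N.adj x y) {t : ℝ}
    (h1 : t + τ ≠ 1) (h2 : t - τ ≠ 1) :
    N.dAlembertFun f τ x y (t - 1)
      = (2 / (N.m0 x) : ℂ) * ∑' u, (N.c x u : ℂ) * N.dAlembertFun f τ u x t
        - N.dAlembertFun f τ y x t := by
  have e1 : t - 1 + τ = (t + τ) - 1 := by ring
  have e2 : t - 1 - τ = (t - τ) - 1 := by ring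
  unfold dAlembertFun
  rw [e1, e2, N.tilde_rec_bwd hf hxy h1, N.tilde_rec_bwd hf hxy h2]
  have hs1 := N.summable_c_tilde₁ hf x (t + τ)
  have hs2 := N.summable_c_tilde₁ hf x (t - τ)
  have hsum : ∑' u, (N.c x u : ℂ) * ((N.tilde f u x (t + τ) + N.tilde f u x (t - τ)) / 2)
      = ((∑' u, (N.c x u : ℂ) * N.tilde f u x (t + τ))
          + ∑' u, (N.c x u : ℂ) * N.tilde f u x (t - τ)) / 2 := by
    have h1' : ∀ u, (N.c x u : ℂ) * ((N.tilde f u x (t + τ) + N.tilde f u x (t - τ)) / 2)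
        = ((N.c x u : ℂ) * N.tilde f u x (t + τ)
            + (N.c x u : ℂ) * N.tilde f u x (t - τ)) / 2 := fun u => by ring
    rw [tsum_congr h1', tsum_div_const, Summable.tsum_add hs1 hs2]
  rw [hsum]
  ring

end Network


namespace Network

variable {V : Type} [Countable V] [MeasurableSpace V] [DiscreteMeasurableSpace V]

lemma fwdExt_dAl (N : Network V) {f : V → V → ℝ → ℂ}
    (hf : ∀ u, N.sqSum f u ≠ ⊤) {τ : ℝ} (n : ℕ) {s : ℝ}
    (hb : ∀ j : ℕ, j < n → (s + j + τ ≠ 0 ∧ s + j - τ ≠ 0)) :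
    ∀ x y : V, N.adj x y →
      N.fwdExt (N.dAlembertFun f τ) n x y s = N.dAlembertFun f τ x y (s + n) := by
  induction n with
  | zero => intro x y _; simp [fwdExt]
  | succ n ih =>
    intro x y hxy
    have ih' := ih (fun j hj => hb j (Nat.lt_succ_of_lt hj))
    rw [N.fwdExt_succ]
    have hterm : ∀ v, (N.c y v : ℂ) * N.fwdExt (N.dAlembertFun f τ) n y v s
        = (N.c y v : ℂ) * N.dAlembertFun f τ y v (s + n) := by
      intro v
      by_cases hc : N.c y v = 0
      · rw [hc]; push_cast; rw [zero_mul, zero_mul]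
      · rw [ih' y v (N.adj_of_c_ne hc)]
    rw [tsum_congr hterm, ih' y x (N.adj_symm x y hxy)]
    have hrec := N.dAl_rec_fwd hf hxy
      (hb n (Nat.lt_succ_self n)).1 (hb n (Nat.lt_succ_self n)).2
    rw [← hrec]
    congr 1
    push_cast
    ring

lemma bwdExt_dAl (N : Network V) {f : V → V → ℝ → ℂ}
    (hf : ∀ u, N.sqSum f u ≠ ⊤) {τ : ℝ} (n : ℕ) {s : ℝ}
    (hb : ∀ j : ℕ, j < n → (s - j + τ ≠ 1 ∧ s - j - τ ≠ 1)) :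
    ∀ x y : V, N.adj x y →
      N.bwdExt (N.dAlembertFun f τ) n x y s = N.dAlembertFun f τ x y (s - n) := by
  induction n with
  | zero => intro x y _; simp [bwdExt]
  | succ n ih =>
    intro x y hxy
    have ih' := ih (fun j hj => hb j (Nat.lt_succ_of_lt hj))
    rw [N.bwdExt_succ]
    have hterm : ∀ v, (N.c x v : ℂ) * N.bwdExt (N.dAlembertFun f τ) n v x s
        = (N.c x v : ℂ) * N.dAlembertFun f τ v x (s - n) := by
      intro v
      by_cases hc : N.c x v = 0
      · rw [hc]; push_cast; rw [zero_mul, zero_mul]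
      · rw [ih' v x (N.adj_symm x v (N.adj_of_c_ne hc))]
    rw [tsum_congr hterm, ih' y x (N.adj_symm x y hxy)]
    have hrec := N.dAl_rec_bwd hf hxy
      (hb n (Nat.lt_succ_self n)).1 (hb n (Nat.lt_succ_self n)).2
    rw [← hrec]
    congr 1
    push_cast
    ring

/-- The `tilde`-extension of `C(τ)f` agrees with the global formula
`(f̃(t+τ)+f̃(t-τ))/2` away from a countable set of times. -/
lemma tilde_dAl_eq (N : Network V) {f : V → V → ℝ → ℂ}
    (hf : ∀ u, N.sqSum f u ≠ ⊤) {τ : ℝ} {x y : V} (hxy : N.adj x y) {t : ℝ}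
    (hp : ∀ k : ℤ, t + τ ≠ (k : ℝ)) (hm : ∀ k : ℤ, t - τ ≠ (k : ℝ)) :
    N.tilde (N.dAlembertFun f τ) x y t = N.dAlembertFun f τ x y t := by
  by_cases h01 : 0 ≤ t ∧ t ≤ 1
  · exact N.tilde_of_mem _ x y h01.1 h01.2
  by_cases h1 : 1 < t
  · rw [N.tilde_pos _ x y (by linarith : (0:ℝ) < t)]
    set n : ℕ := (⌈t⌉ - 1).toNat with hn
    have h2 : (1:ℤ) ≤ ⌈t⌉ := by
      have := Int.lt_ceil.mpr (show ((1:ℤ):ℝ) < t by exact_mod_cast h1)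
      omega
    have hcast : ((n : ℤ) : ℝ) = (⌈t⌉ : ℝ) - 1 := by
      have hz : ((⌈t⌉ - 1).toNat : ℤ) = ⌈t⌉ - 1 := by omega
      rw [hn]
      exact_mod_cast congrArg (fun z : ℤ => (z : ℝ)) hz
    have hs : t - ((⌈t⌉ - 1 : ℤ) : ℝ) + n = t := by
      push_cast at hcast ⊢
      rw [hcast]; ring
    have hb : ∀ j : ℕ, j < n →
        (t - ((⌈t⌉ - 1 : ℤ) : ℝ) + j + τ ≠ 0 ∧ t - ((⌈t⌉ - 1 : ℤ) : ℝ) + j - τ ≠ 0) := by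
      intro j _
      constructor
      · intro hz
        exact hp (⌈t⌉ - 1 - j) (by push_cast at hz ⊢; linarith)
      · intro hz
        exact hm (⌈t⌉ - 1 - j) (by push_cast at hz ⊢; linarith)
    rw [N.fwdExt_dAl hf n hb x y hxy, hs]
  · push_neg at h1
    have ht0 : t < 0 := by
      by_cases h : 0 ≤ t
      · exact absurd ⟨h, h1⟩ h01
      · exact not_le.mp h
    rw [N.tilde_lt_one _ x y (by linarith : t < 1)]
    set n : ℕ := (-⌊t⌋).toNat with hn
    have hfl : ⌊t⌋ < 0 := Int.floor_lt.mpr (by exact_mod_cast ht0)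
    have hcast : ((n : ℤ) : ℝ) = -(⌊t⌋ : ℝ) := by
      have hz : ((-⌊t⌋).toNat : ℤ) = -⌊t⌋ := by omega
      rw [hn]
      exact_mod_cast congrArg (fun z : ℤ => (z : ℝ)) hz
    have hs : t + ((-⌊t⌋ : ℤ) : ℝ) - n = t := by
      push_cast at hcast ⊢
      rw [hcast]; ring
    have hb : ∀ j : ℕ, j < n →
        (t + ((-⌊t⌋ : ℤ) : ℝ) - j + τ ≠ 1 ∧ t + ((-⌊t⌋ : ℤ) : ℝ) - j - τ ≠ 1) := by
      intro j _
      constructor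
      · intro hz
        exact hp (1 + j + ⌊t⌋) (by push_cast at hz ⊢; linarith)
      · intro hz
        exact hm (1 + j + ⌊t⌋) (by push_cast at hz ⊢; linarith)
    rw [N.bwdExt_dAl hf n hb x y hxy, hs]

/-- The key pointwise double-angle identity. -/
lemma key_pointwise (N : Network V) {f : V → V → ℝ → ℂ}
    (hf : ∀ u, N.sqSum f u ≠ ⊤) {τ : ℝ} {x y : V} (hxy : N.adj x y) {t : ℝ}
    (hpp : ∀ k : ℤ, t + 2 * τ ≠ (k : ℝ)) (h0 : ∀ k : ℤ, t ≠ (k : ℝ))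
    (hmm : ∀ k : ℤ, t - 2 * τ ≠ (k : ℝ))
    (ht0 : 0 ≤ t) (ht1 : t ≤ 1) :
    2 * N.dAlembertFun (N.dAlembertFun f τ) τ x y t
      = N.dAlembertFun f (2 * τ) x y t + f x y t := by
  have e1 : N.tilde (N.dAlembertFun f τ) x y (t + τ) = N.dAlembertFun f τ x y (t + τ) :=
    N.tilde_dAl_eq hf hxy (fun k h => hpp k (by linarith)) (fun k h => h0 k (by linarith))
  have e2 : N.tilde (N.dAlembertFun f τ) x y (t - τ) = N.dAlembertFun f τ x y (t - τ) :=
    N.tilde_dAl_eq hf hxy (fun k h => h0 k (by linarith)) (fun k h => hmm k (by linarith))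
  have expand : ∀ (g : V → V → ℝ → ℂ) (σ u : ℝ),
      N.dAlembertFun g σ x y u = (N.tilde g x y (u + σ) + N.tilde g x y (u - σ)) / 2 :=
    fun _ _ _ => rfl
  have a1 : t + τ + τ = t + 2 * τ := by ring
  have a2 : t + τ - τ = t := by ring
  have a3 : t - τ + τ = t := by ring
  have a4 : t - τ - τ = t - 2 * τ := by ring
  rw [expand (N.dAlembertFun f τ) τ t, e1, e2, expand f τ (t + τ), expand f τ (t - τ),
    expand f (2 * τ) t, a1, a2, a3, a4, N.tilde_of_mem f x y ht0 ht1]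
  ring

end Network


/-- The base point in `[0,1]` from which `tilde` computes its value at `t`. -/
def baseArg (t : ℝ) : ℝ :=
  if 0 ≤ t ∧ t ≤ 1 then t else if 1 < t then t - ((⌈t⌉ - 1 : ℤ) : ℝ) else t + ((-⌊t⌋ : ℤ) : ℝ)

lemma baseArg_mem (t : ℝ) : baseArg t ∈ Set.Icc (0:ℝ) 1 := by
  unfold baseArg
  split_ifs with h1 h2
  · exact ⟨h1.1, h1.2⟩
  · constructor
    · push_cast; linarith [Int.ceil_lt_add_one t]
    · push_cast; linarith [Int.le_ceil t]
  · constructor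
    · push_cast; linarith [Int.floor_le t]
    · push_cast; linarith [Int.lt_floor_add_one t]

lemma baseArg_sub_int (t : ℝ) : ∃ k : ℤ, baseArg t = t - (k : ℝ) := by
  unfold baseArg
  split_ifs with h1 h2
  · exact ⟨0, by simp⟩
  · exact ⟨⌈t⌉ - 1, rfl⟩
  · exact ⟨⌊t⌋, by push_cast; ring⟩

namespace Network

variable {V : Type} [Countable V] [MeasurableSpace V] [DiscreteMeasurableSpace V]

lemma fwdExt_congr (N : Network V) {f₁ f₂ : V → V → ℝ → ℂ} {s : ℝ}
    (h : ∀ a b, N.c a b ≠ 0 → f₁ a b s = f₂ a b s) :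
    ∀ n, ∀ x y : V, N.c x y ≠ 0 → N.fwdExt f₁ n x y s = N.fwdExt f₂ n x y s := by
  intro n
  induction n with
  | zero => exact fun x y hc => h x y hc
  | succ n ih =>
    intro x y hc
    have hyx : N.c y x ≠ 0 := by rw [N.c_symm]; exact hc
    rw [N.fwdExt_succ, N.fwdExt_succ]
    have hterm : ∀ v, (N.c y v : ℂ) * N.fwdExt f₁ n y v s
        = (N.c y v : ℂ) * N.fwdExt f₂ n y v s := by
      intro v
      by_cases hcv : N.c y v = 0
      · rw [hcv]; push_cast; rw [zero_mul, zero_mul]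
      · rw [ih y v hcv]
    rw [tsum_congr hterm, ih y x hyx]

lemma bwdExt_congr (N : Network V) {f₁ f₂ : V → V → ℝ → ℂ} {s : ℝ}
    (h : ∀ a b, N.c a b ≠ 0 → f₁ a b s = f₂ a b s) :
    ∀ n, ∀ x y : V, N.c x y ≠ 0 → N.bwdExt f₁ n x y s = N.bwdExt f₂ n x y s := by
  intro n
  induction n with
  | zero => exact fun x y hc => h x y hc
  | succ n ih =>
    intro x y hc
    have hyx : N.c y x ≠ 0 := by rw [N.c_symm]; exact hc
    rw [N.bwdExt_succ, N.bwdExt_succ]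
    have hterm : ∀ v, (N.c x v : ℂ) * N.bwdExt f₁ n v x s
        = (N.c x v : ℂ) * N.bwdExt f₂ n v x s := by
      intro v
      by_cases hcv : N.c x v = 0
      · rw [hcv]; push_cast; rw [zero_mul, zero_mul]
      · rw [ih v x (by rw [N.c_symm]; exact hcv)]
    rw [tsum_congr hterm, ih y x hyx]

lemma tilde_congr (N : Network V) {f₁ f₂ : V → V → ℝ → ℂ} {x y : V} (hc : N.c x y ≠ 0)
    {t : ℝ} (h : ∀ a b, N.c a b ≠ 0 → f₁ a b (baseArg t) = f₂ a b (baseArg t)) :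
    N.tilde f₁ x y t = N.tilde f₂ x y t := by
  unfold baseArg at h
  unfold tilde
  split_ifs at h ⊢ with h1 h2
  · exact h x y hc
  · exact N.fwdExt_congr h _ x y hc
  · exact N.bwdExt_congr h _ x y hc

lemma dAl_congr_pointwise (N : Network V) {f₁ f₂ : V → V → ℝ → ℂ} {σ : ℝ} {x y : V}
    (hc : N.c x y ≠ 0) {t : ℝ}
    (h₁ : ∀ a b, N.c a b ≠ 0 → f₁ a b (baseArg (t + σ)) = f₂ a b (baseArg (t + σ)))
    (h₂ : ∀ a b, N.c a b ≠ 0 → f₁ a b (baseArg (t - σ)) = f₂ a b (baseArg (t - σ))) :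
    N.dAlembertFun f₁ σ x y t = N.dAlembertFun f₂ σ x y t := by
  unfold dAlembertFun
  rw [N.tilde_congr hc h₁, N.tilde_congr hc h₂]

lemma ae_edgeMeasure_iff (N : Network V) {Q : (V × V) × ℝ → Prop} :
    (∀ᵐ p ∂N.edgeMeasure, Q p)
      ↔ ∀ e : V × V, N.c e.1 e.2 ≠ 0 →
          ∀ᵐ t ∂(volume.restrict (Set.Ioo (0:ℝ) 1)), Q (e, t) := by
  have hsmul : ∀ e : V × V, N.c e.1 e.2 ≠ 0 → ENNReal.ofReal (N.c e.1 e.2 / 2) ≠ 0 := by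
    intro e hc
    rw [Ne, ENNReal.ofReal_eq_zero, not_le]
    have h1 : 0 < N.c e.1 e.2 := lt_of_le_of_ne (N.c_nonneg e.1 e.2) (Ne.symm hc)
    linarith
  rw [edgeMeasure, Measure.ae_sum_iff]
  constructor
  · intro h e hc
    have h' := h e
    rw [(measurableEmbedding_prodMk_left e).ae_map_iff,
      (show ∀ p : ℝ → Prop, (∀ᵐ x ∂(ENNReal.ofReal (N.c e.1 e.2 / 2) • volume.restrict (Set.Ioo (0:ℝ) 1)), p x) ↔ ∀ᵐ x ∂(volume.restrict (Set.Ioo (0:ℝ) 1)), p x from fun p => by simp [ae_iff, hsmul e hc])] at h'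
    exact h'
  · intro h e
    rw [(measurableEmbedding_prodMk_left e).ae_map_iff]
    by_cases hc : N.c e.1 e.2 = 0
    · have hz : ENNReal.ofReal (N.c e.1 e.2 / 2) = 0 := by
        rw [ENNReal.ofReal_eq_zero, hc]; norm_num
      rw [hz, zero_smul]
      simp
    · rw [(show ∀ p : ℝ → Prop, (∀ᵐ x ∂(ENNReal.ofReal (N.c e.1 e.2 / 2) • volume.restrict (Set.Ioo (0:ℝ) 1)), p x) ↔ ∀ᵐ x ∂(volume.restrict (Set.Ioo (0:ℝ) 1)), p x from fun p => by simp [ae_iff, hsmul e hc])]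
      exact h e hc

lemma ae_agree (N : Network V) {f₁ f₂ : V → V → ℝ → ℂ}
    (h : (fun p : (V × V) × ℝ => f₁ p.1.1 p.1.2 p.2)
        =ᵐ[N.edgeMeasure] fun p => f₂ p.1.1 p.1.2 p.2) :
    ∀ᵐ s ∂(volume.restrict (Set.Ioo (0:ℝ) 1)),
      ∀ a b : V, N.c a b ≠ 0 → f₁ a b s = f₂ a b s := by
  have h' := N.ae_edgeMeasure_iff.mp h
  rw [ae_all_iff]
  intro a
  rw [ae_all_iff]
  intro b
  by_cases hc : N.c a b = 0
  · exact Filter.Eventually.of_forall fun s hcc => (hcc hc).elim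
  · exact (h' (a, b) hc).mono fun s hs _ => hs

lemma exists_null_bad (N : Network V) {f₁ f₂ : V → V → ℝ → ℂ}
    (h : (fun p : (V × V) × ℝ => f₁ p.1.1 p.1.2 p.2)
        =ᵐ[N.edgeMeasure] fun p => f₂ p.1.1 p.1.2 p.2) :
    ∃ T : Set ℝ, MeasurableSet T ∧ volume T = 0 ∧
      ∀ s ∈ Set.Ioo (0:ℝ) 1, s ∉ T → ∀ a b : V, N.c a b ≠ 0 → f₁ a b s = f₂ a b s := by
  have h' := N.ae_agree h
  set Bad : Set ℝ := {s : ℝ | ¬ ∀ a b : V, N.c a b ≠ 0 → f₁ a b s = f₂ a b s} with hBad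
  have hB : (volume.restrict (Set.Ioo (0:ℝ) 1)) Bad = 0 := ae_iff.mp h'
  have hB2 : volume (Bad ∩ Set.Ioo (0:ℝ) 1) = 0 := by
    rw [← Measure.restrict_apply' measurableSet_Ioo]
    exact hB
  refine ⟨toMeasurable volume (Bad ∩ Set.Ioo 0 1), measurableSet_toMeasurable _ _,
    by rwa [measure_toMeasurable], ?_⟩
  intro s hs hsT a b hc
  by_contra hne
  exact hsT (subset_toMeasurable _ _ ⟨fun hall => hne (hall a b hc), hs⟩)

lemma dAl_ae_congr (N : Network V) {f₁ f₂ : V → V → ℝ → ℂ}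
    (h : (fun p : (V × V) × ℝ => f₁ p.1.1 p.1.2 p.2)
        =ᵐ[N.edgeMeasure] fun p => f₂ p.1.1 p.1.2 p.2) (σ : ℝ) :
    (fun p : (V × V) × ℝ => N.dAlembertFun f₁ σ p.1.1 p.1.2 p.2)
      =ᵐ[N.edgeMeasure] fun p => N.dAlembertFun f₂ σ p.1.1 p.1.2 p.2 := by
  obtain ⟨T, hTm, hT0, hTprop⟩ := N.exists_null_bad h
  set U : Set ℝ := T ∪ {0, 1} with hU
  have hUm : MeasurableSet U :=
    hTm.union ((Set.toFinite ({0, 1} : Set ℝ)).measurableSet)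
  have hU0 : volume U = 0 := by
    refine measure_union_null hT0 ?_
    exact ((Set.toFinite ({0, 1} : Set ℝ)).countable).measure_zero _
  have hgood : ∀ u : ℝ, baseArg u ∉ U →
      ∀ a b : V, N.c a b ≠ 0 → f₁ a b (baseArg u) = f₂ a b (baseArg u) := by
    intro u hu a b hc
    have hmem := baseArg_mem u
    have hne0 : baseArg u ≠ 0 := fun hq => hu (Or.inr (by rw [hq]; exact Set.mem_insert _ _))
    have hne1 : baseArg u ≠ 1 :=
      fun hq => hu (Or.inr (by rw [hq]; exact Set.mem_insert_of_mem _ rfl))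
    have hIoo : baseArg u ∈ Set.Ioo (0:ℝ) 1 :=
      ⟨lt_of_le_of_ne hmem.1 (Ne.symm hne0), lt_of_le_of_ne hmem.2 hne1⟩
    exact hTprop _ hIoo (fun ht => hu (Or.inl ht)) a b hc
  set B : Set ℝ := ⋃ k : ℤ, (fun u : ℝ => u - (k : ℝ)) ⁻¹' U with hB
  have hBm : MeasurableSet B :=
    MeasurableSet.iUnion fun k => hUm.preimage (measurable_id.sub_const _)
  have hB0 : volume B = 0 := by
    rw [measure_iUnion_null_iff]
    intro k
    rw [(measurePreserving_sub_right volume ((k : ℝ))).measure_preimage hUm.nullMeasurableSet]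
    exact hU0
  have hbase : ∀ u : ℝ, u ∉ B → baseArg u ∉ U := by
    intro u hu hmemU
    obtain ⟨k, hk⟩ := baseArg_sub_int u
    exact hu (Set.mem_iUnion.mpr ⟨k, by rw [Set.mem_preimage, ← hk]; exact hmemU⟩)
  apply N.ae_edgeMeasure_iff.mpr
  intro e hc
  have hnull : volume (((fun t : ℝ => t + σ) ⁻¹' B) ∪ ((fun t : ℝ => t - σ) ⁻¹' B)) = 0 := by
    refine measure_union_null ?_ ?_
    · rw [(measurePreserving_add_right volume σ).measure_preimage hBm.nullMeasurableSet]
      exact hB0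
    · rw [(measurePreserving_sub_right volume σ).measure_preimage hBm.nullMeasurableSet]
      exact hB0
  have hae : ∀ᵐ t ∂(volume.restrict (Set.Ioo (0:ℝ) 1)),
      t ∉ (((fun t : ℝ => t + σ) ⁻¹' B) ∪ ((fun t : ℝ => t - σ) ⁻¹' B)) :=
    ae_restrict_of_ae (measure_eq_zero_iff_ae_notMem.mp hnull)
  refine hae.mono fun t ht => ?_
  have h1 : t + σ ∉ B := fun hmem => ht (Or.inl hmem)
  have h2 : t - σ ∉ B := fun hmem => ht (Or.inr hmem)
  exact N.dAl_congr_pointwise hc (hgood _ (hbase _ h1)) (hgood _ (hbase _ h2))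

end Network


namespace Network

variable {V : Type} [Countable V] [MeasurableSpace V] [DiscreteMeasurableSpace V]

lemma lintegral_edgeMeasure (N : Network V) (g : (V × V) × ℝ → ℝ≥0∞) (hg : Measurable g) :
    ∫⁻ p, g p ∂N.edgeMeasure
      = ∫⁻ s in Set.Ioo (0:ℝ) 1,
          ∑' e : V × V, ENNReal.ofReal (N.c e.1 e.2 / 2) * g (e, s) := by
  have he : ∀ e : V × V,
      ∫⁻ p, g p
          ∂(Measure.map (fun t => (e, t))
            ((ENNReal.ofReal (N.c e.1 e.2 / 2)) • (volume.restrict (Set.Ioo (0:ℝ) 1))))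
        = ∫⁻ s in Set.Ioo (0:ℝ) 1, ENNReal.ofReal (N.c e.1 e.2 / 2) * g (e, s) := by
    intro e
    rw [(measurableEmbedding_prodMk_left e).lintegral_map, lintegral_smul_measure, smul_eq_mul,
      ← lintegral_const_mul' _ _ ENNReal.ofReal_ne_top]
  rw [show N.edgeMeasure = Measure.sum (fun e : V × V =>
      Measure.map (fun t => (e, t))
        ((ENNReal.ofReal (N.c e.1 e.2 / 2)) • (volume.restrict (Set.Ioo (0:ℝ) 1)))) from rfl,
    lintegral_sum_measure, tsum_congr he, ← lintegral_tsum]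
  exact fun e => ((hg.comp measurable_prodMk_left).const_mul _).aemeasurable

lemma ae_sqSum_ne_top (N : Network V) (F : Lp ℂ 2 N.edgeMeasure) :
    ∀ᵐ s ∂(volume.restrict (Set.Ioo (0:ℝ) 1)), N.sqSum (N.edgeFun F) s ≠ ⊤ := by
  have hFm : StronglyMeasurable ⇑F := Lp.stronglyMeasurable F
  have hg : Measurable fun p : (V × V) × ℝ => (‖F p‖₊ : ℝ≥0∞) ^ 2 :=
    (hFm.measurable.enorm).pow_const 2
  have hint : ∫⁻ p, (‖F p‖₊ : ℝ≥0∞) ^ 2 ∂N.edgeMeasure < ⊤ := by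
    have h := lintegral_rpow_enorm_lt_top_of_eLpNorm_lt_top
      (f := ⇑F) (p := 2) (by norm_num) (by norm_num) (Lp.memLp F).2
    have h2 : ((2:ℝ≥0∞)).toReal = ((2:ℕ) : ℝ) := by norm_num
    rw [h2] at h
    refine lt_of_eq_of_lt ?_ h
    refine lintegral_congr fun p => ?_
    rw [ENNReal.rpow_natCast, enorm_eq_nnnorm]
  have hcalc := N.lintegral_edgeMeasure (fun p => (‖F p‖₊ : ℝ≥0∞) ^ 2) hg
  have hfin : ∫⁻ s in Set.Ioo (0:ℝ) 1,
      (∑' e : V × V, ENNReal.ofReal (N.c e.1 e.2 / 2) * (‖F (e, s)‖₊ : ℝ≥0∞) ^ 2) ≠ ⊤ := by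
    rw [← hcalc]
    exact hint.ne
  have hmeas : ∀ e : V × V,
      Measurable fun s : ℝ => ENNReal.ofReal (N.c e.1 e.2 / 2) * (‖F (e, s)‖₊ : ℝ≥0∞) ^ 2 :=
    fun e => ((hg.comp measurable_prodMk_left).const_mul _)
  have hae := ae_lt_top' (f := fun s =>
      ∑' e : V × V, ENNReal.ofReal (N.c e.1 e.2 / 2) * (‖F (e, s)‖₊ : ℝ≥0∞) ^ 2)
    (Measurable.aemeasurable (by exact Measurable.ennreal_tsum hmeas)) hfin
  refine hae.mono fun s hs => ?_
  have hsq : N.sqSum (N.edgeFun F) s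
      = 2 * ∑' e : V × V, ENNReal.ofReal (N.c e.1 e.2 / 2) * (‖F (e, s)‖₊ : ℝ≥0∞) ^ 2 := by
    rw [sqSum, ← ENNReal.tsum_mul_left]
    refine tsum_congr fun e => ?_
    rw [← mul_assoc]
    congr 1
    rw [show (2:ℝ≥0∞) = ENNReal.ofReal 2 by norm_num,
      ← ENNReal.ofReal_mul (by norm_num : (0:ℝ) ≤ 2)]
    congr 1
    ring
  rw [hsq]
  exact ENNReal.mul_ne_top (by norm_num) hs.ne

end Network

/-- For every `τ ∈ [0,1/2]` the d'Alembert operators satisfy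
`C(2τ) + I = 2·C(τ)²` as bounded operators on `L²(X¹,m¹)`.  Here
`C : ℝ → B(L²(X¹,m¹))` is the family of (bounded) d'Alembert operators, characterized by
`(C(τ)F)(xy,t) = (F̃(xy,t+τ) + F̃(xy,t-τ))/2` almost everywhere. -/
theorem dAlembert_double_angle_identity
    {V : Type} [Countable V] [MeasurableSpace V] [DiscreteMeasurableSpace V]
    (N : Network V)
    (C : ℝ → (N.L2X →L[ℂ] N.L2X))
    (hC : ∀ σ : ℝ, ∀ F : N.L2X,
      ⇑(C σ F : Lp ℂ 2 N.edgeMeasure) =ᵐ[N.edgeMeasure]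
        fun p => N.dAlembertFun (N.edgeFun (F : Lp ℂ 2 N.edgeMeasure)) σ p.1.1 p.1.2 p.2)
    (τ : ℝ) (hτ : τ ∈ Set.Icc (0:ℝ) (1/2)) :
    C (2 * τ) + ContinuousLinearMap.id ℂ N.L2X = (2:ℂ) • ((C τ).comp (C τ)) := by
  classical
  refine ContinuousLinearMap.ext fun F => ?_
  have happly : (C (2 * τ) + ContinuousLinearMap.id ℂ N.L2X) F = C (2 * τ) F + F := rfl
  have happly2 : ((2:ℂ) • ((C τ).comp (C τ))) F = (2:ℂ) • (C τ (C τ F)) := rfl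
  rw [happly, happly2]
  refine Subtype.ext ?_
  have hcoe1 : ((C (2 * τ) F + F : N.L2X) : Lp ℂ 2 N.edgeMeasure)
      = ((C (2 * τ) F : N.L2X) : Lp ℂ 2 N.edgeMeasure) + ((F : N.L2X) : Lp ℂ 2 N.edgeMeasure) :=
    rfl
  have hcoe2 : (((2:ℂ) • (C τ (C τ F)) : N.L2X) : Lp ℂ 2 N.edgeMeasure)
      = (2:ℂ) • ((C τ (C τ F) : N.L2X) : Lp ℂ 2 N.edgeMeasure) := rfl
  rw [hcoe1, hcoe2]
  apply MeasureTheory.Lp.ext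
  set f : V → V → ℝ → ℂ := N.edgeFun ((F : N.L2X) : Lp ℂ 2 N.edgeMeasure) with hfdef
  set f' : V → V → ℝ → ℂ := fun a b s => if N.sqSum f s ≠ ⊤ then f a b s else 0 with hf'def
  have hPf' : ∀ s, N.sqSum f' s ≠ ⊤ := by
    intro s
    by_cases h : N.sqSum f s ≠ ⊤
    · have he : N.sqSum f' s = N.sqSum f s := by
        rw [Network.sqSum, Network.sqSum]
        refine tsum_congr fun e => ?_
        simp only [hf'def]
        simp [h]
      rw [he]; exact h
    · have he : N.sqSum f' s = 0 := by
        rw [Network.sqSum]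
        have hz : ∀ e : V × V,
            ENNReal.ofReal (N.c e.1 e.2) * (‖f' e.1 e.2 s‖₊ : ℝ≥0∞) ^ 2 = 0 := by
          intro e
          simp only [hf'def]
          simp [h]
        rw [tsum_congr hz, tsum_zero]
      rw [he]; exact ENNReal.zero_ne_top
  have hae_ff' : (fun p : (V × V) × ℝ => f p.1.1 p.1.2 p.2)
      =ᵐ[N.edgeMeasure] fun p => f' p.1.1 p.1.2 p.2 := by
    apply N.ae_edgeMeasure_iff.mpr
    intro e hc
    refine (N.ae_sqSum_ne_top ((F : N.L2X) : Lp ℂ 2 N.edgeMeasure)).mono fun s hs => ?_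
    have hs' : N.sqSum f s ≠ ⊤ := hs
    simp only [hf'def]
    simp [hs']
  have hCf : ∀ σ : ℝ, ⇑((C σ F : N.L2X) : Lp ℂ 2 N.edgeMeasure)
      =ᵐ[N.edgeMeasure] fun p : (V × V) × ℝ => N.dAlembertFun f σ p.1.1 p.1.2 p.2 :=
    fun σ => hC σ F
  have h1 : ⇑((C τ F : N.L2X) : Lp ℂ 2 N.edgeMeasure)
      =ᵐ[N.edgeMeasure] fun p : (V × V) × ℝ => N.dAlembertFun f' τ p.1.1 p.1.2 p.2 :=
    (hCf τ).trans (N.dAl_ae_congr hae_ff' τ)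
  have h2 : (fun p : (V × V) × ℝ =>
        N.edgeFun ((C τ F : N.L2X) : Lp ℂ 2 N.edgeMeasure) p.1.1 p.1.2 p.2)
      =ᵐ[N.edgeMeasure] fun p : (V × V) × ℝ => N.dAlembertFun f' τ p.1.1 p.1.2 p.2 := h1
  have h3 : ⇑((C τ (C τ F) : N.L2X) : Lp ℂ 2 N.edgeMeasure)
      =ᵐ[N.edgeMeasure] fun p : (V × V) × ℝ =>
        N.dAlembertFun (N.dAlembertFun f' τ) τ p.1.1 p.1.2 p.2 :=
    (hC τ (C τ F)).trans (N.dAl_ae_congr h2 τ)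
  have hkey : ∀ᵐ p ∂N.edgeMeasure,
      2 * N.dAlembertFun (N.dAlembertFun f' τ) τ p.1.1 p.1.2 p.2
        = N.dAlembertFun f' (2 * τ) p.1.1 p.1.2 p.2 + f' p.1.1 p.1.2 p.2 := by
    apply N.ae_edgeMeasure_iff.mpr
    intro e hc
    have hadj := N.adj_of_c_ne hc
    set S : Set ℝ := ⋃ k : ℤ, ({(k : ℝ) - 2 * τ, (k : ℝ), (k : ℝ) + 2 * τ} : Set ℝ) with hSdef
    have hS0 : volume S = 0 := by
      rw [hSdef, measure_iUnion_null_iff]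
      intro k
      exact ((Set.toFinite _).countable).measure_zero _
    have hae1 : ∀ᵐ t ∂(volume.restrict (Set.Ioo (0:ℝ) 1)), t ∉ S :=
      ae_restrict_of_ae (measure_eq_zero_iff_ae_notMem.mp hS0)
    have hae2 : ∀ᵐ t ∂(volume.restrict (Set.Ioo (0:ℝ) 1)), t ∈ Set.Ioo (0:ℝ) 1 :=
      ae_restrict_mem measurableSet_Ioo
    refine (hae1.and hae2).mono fun t ht => ?_
    obtain ⟨htS, htI⟩ := ht
    refine N.key_pointwise hPf' hadj ?_ ?_ ?_ htI.1.le htI.2.le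
    · intro k hk
      exact htS (Set.mem_iUnion.mpr ⟨k, by
        simp only [Set.mem_insert_iff, Set.mem_singleton_iff]
        left; linarith⟩)
    · intro k hk
      exact htS (Set.mem_iUnion.mpr ⟨k, by
        simp only [Set.mem_insert_iff, Set.mem_singleton_iff]
        right; left; linarith⟩)
    · intro k hk
      exact htS (Set.mem_iUnion.mpr ⟨k, by
        simp only [Set.mem_insert_iff, Set.mem_singleton_iff]
        right; right; linarith⟩)
  have hsm : ((2:ℂ) • ⇑((C τ (C τ F) : N.L2X) : Lp ℂ 2 N.edgeMeasure))
      =ᵐ[N.edgeMeasure] fun p : (V × V) × ℝ =>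
        2 * N.dAlembertFun (N.dAlembertFun f' τ) τ p.1.1 p.1.2 p.2 := by
    filter_upwards [h3] with p hp
    simp only [Pi.smul_apply, smul_eq_mul, hp]
  have hFf' : ⇑((F : N.L2X) : Lp ℂ 2 N.edgeMeasure)
      =ᵐ[N.edgeMeasure] fun p : (V × V) × ℝ => f' p.1.1 p.1.2 p.2 := hae_ff'
  have h2τ : ⇑((C (2 * τ) F : N.L2X) : Lp ℂ 2 N.edgeMeasure)
      =ᵐ[N.edgeMeasure] fun p : (V × V) × ℝ => N.dAlembertFun f' (2 * τ) p.1.1 p.1.2 p.2 :=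
    (hCf (2 * τ)).trans (N.dAl_ae_congr hae_ff' (2 * τ))
  calc ⇑(((C (2 * τ) F : N.L2X) : Lp ℂ 2 N.edgeMeasure)
        + ((F : N.L2X) : Lp ℂ 2 N.edgeMeasure))
      =ᵐ[N.edgeMeasure] ⇑((C (2 * τ) F : N.L2X) : Lp ℂ 2 N.edgeMeasure)
        + ⇑((F : N.L2X) : Lp ℂ 2 N.edgeMeasure) := Lp.coeFn_add _ _
    _ =ᵐ[N.edgeMeasure] (fun p : (V × V) × ℝ => N.dAlembertFun f' (2 * τ) p.1.1 p.1.2 p.2)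
        + fun p : (V × V) × ℝ => f' p.1.1 p.1.2 p.2 := h2τ.add hFf'
    _ =ᵐ[N.edgeMeasure] fun p : (V × V) × ℝ =>
        2 * N.dAlembertFun (N.dAlembertFun f' τ) τ p.1.1 p.1.2 p.2 :=
      hkey.mono fun p hp => by rw [Pi.add_apply]; exact hp.symm
    _ =ᵐ[N.edgeMeasure] (2:ℂ) • ⇑((C τ (C τ F) : N.L2X) : Lp ℂ 2 N.edgeMeasure) :=
      hsm.symm
    _ =ᵐ[N.edgeMeasure] ⇑((2:ℂ) • ((C τ (C τ F) : N.L2X) : Lp ℂ 2 N.edgeMeasure)) :=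
      (Lp.coeFn_smul _ _).symm
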